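/- arXiv:2007.02212 — 6 statements merged into one kernel-verified Lean document; each statement's English description precedes it below -/
import Mathlib

section
/- Let d ≥ 1 be an integer and α ∈ (0,2) with d + α > 2. For all x, y ∈ ℝ^d with ⟨x, y⟩ ≥ 0 and x ≠ y, one has |x−y|^{−(d+α−2)} − |x+y|^{−(d+α−2)} ≤ 2(d+α−2) ⟨x, y⟩ |x−y|^{−(d+α)}. -/
open MeasureTheory Real Filter
open scoped RealInnerProductSpace

lemma key_rpow_ineq {p a b : ℝ} (hp : 0 < p) (ha : 0 < a) (hab : a ≤ b) :
    a ^ (-p) - b ^ (-p) ≤ p * (b - a) * a ^ (-(p + 1)) := by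
  rcases eq_or_lt_of_le hab with rfl | hlt
  · simp
  · have hcont : ContinuousOn (fun t : ℝ => t ^ (-p)) (Set.Icc a b) := by
      intro t ht
      exact (Real.continuousAt_rpow_const t (-p) (Or.inl (ha.trans_le ht.1).ne')).continuousWithinAt
    have hderiv : ∀ t ∈ Set.Ioo a b,
        HasDerivAt (fun t : ℝ => t ^ (-p)) ((-p) * t ^ (-p - 1)) t := fun t ht =>
      Real.hasDerivAt_rpow_const (Or.inl (ha.trans ht.1).ne')
    obtain ⟨c, hc, hceq⟩ := exists_hasDerivAt_eq_slope (fun t : ℝ => t ^ (-p))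
      (fun t => (-p) * t ^ (-p - 1)) hlt hcont hderiv
    have hca : a < c := hc.1
    have hc0 : 0 < c := ha.trans hca
    -- b^(-p) - a^(-p) = (-p) * c^(-p-1) * (b - a)
    have hba : b - a ≠ 0 := sub_ne_zero.mpr hlt.ne'
    have heq : b ^ (-p) - a ^ (-p) = (-p) * c ^ (-p - 1) * (b - a) := by
      rw [eq_div_iff hba] at hceq
      linarith [hceq]
    have hmono : c ^ (-p - 1) ≤ a ^ (-p - 1) :=
      Real.rpow_le_rpow_of_nonpos ha hca.le (by linarith)
    have hb : 0 ≤ b - a := by linarith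
    have : a ^ (-p) - b ^ (-p) = p * c ^ (-p - 1) * (b - a) := by linarith [heq]
    rw [this]
    have : -(p + 1) = -p - 1 := by ring
    rw [this]
    have := mul_le_mul_of_nonneg_left hmono hp.le
    nlinarith [this, hb]

theorem stmt_5 (d : ℕ) (hd : 1 ≤ d) (α : ℝ) (hα : α ∈ Set.Ioo (0 : ℝ) 2)
    (hdα : 2 < (d : ℝ) + α)
    (x y : EuclideanSpace ℝ (Fin d)) (hxy : 0 ≤ ⟪x, y⟫) (hne : x ≠ y) :
    ‖x - y‖ ^ (-((d : ℝ) + α - 2)) - ‖x + y‖ ^ (-((d : ℝ) + α - 2)) ≤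
      2 * ((d : ℝ) + α - 2) * ⟪x, y⟫ * ‖x - y‖ ^ (-((d : ℝ) + α)) := by
  set p : ℝ := (d : ℝ) + α - 2 with hp_def
  have hp : 0 < p := by simp [hp_def]; linarith
  set a : ℝ := ‖x - y‖ with ha_def
  set b : ℝ := ‖x + y‖ with hb_def
  have ha : 0 < a := by
    simpa [ha_def] using norm_pos_iff.mpr (sub_ne_zero.mpr hne)
  have hb0 : 0 ≤ b := norm_nonneg _
  have hsq : b ^ 2 - a ^ 2 = 4 * ⟪x, y⟫ := by
    rw [ha_def, hb_def, norm_add_sq_real, norm_sub_sq_real]; ring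
  have hab : a ≤ b := by nlinarith
  have key := key_rpow_ineq hp ha hab
  have hsplit : a ^ (-(p + 1)) = a * a ^ (-(p + 2)) := by
    rw [show -(p+1) = 1 + -(p+2) by ring, Real.rpow_add ha, Real.rpow_one]
  have hpow : a ^ (-((d : ℝ) + α)) = a ^ (-(p + 2)) := by
    congr 1; rw [hp_def]; ring
  rw [hpow]
  refine le_trans key ?_
  rw [hsplit]
  have hapow : 0 ≤ a ^ (-(p + 2)) := Real.rpow_nonneg ha.le _
  have hfactor : p * (b - a) * a ≤ 2 * p * ⟪x, y⟫ := by
    have h2 : (b - a) * a * 2 ≤ b ^ 2 - a ^ 2 := by nlinarith [sq_nonneg (b - a)]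
    nlinarith [mul_le_mul_of_nonneg_left h2 hp.le, hsq]
  calc p * (b - a) * (a * a ^ (-(p + 2))) = (p * (b - a) * a) * a ^ (-(p + 2)) := by ring
    _ ≤ (2 * p * ⟪x, y⟫) * a ^ (-(p + 2)) := mul_le_mul_of_nonneg_right hfactor hapow
    _ = 2 * p * ⟪x, y⟫ * a ^ (-(p + 2)) := by ring
end

section
/- Let d ≥ 1 be an integer and α ∈ (0,2) with d + α > 2. For all x, y ∈ ℝ^d with ⟨x, y⟩ ≥ 0 and x ≠ y, one has |x−y|^{−(d+α−2)} − |x+y|^{−(d+α−2)} ≥ 2(d+α−2) (|x|² + |y|²)^{−(d+α)/2} ⟨x, y⟩. -/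
open MeasureTheory Real Filter
open scoped RealInnerProductSpace

private lemma aux_conv {u v s q : ℝ} (hu : 0 < u) (hv : 0 < v) (hs : 0 < s)
    (huv : u * v ≤ s ^ 2) (hq : 0 ≤ q) :
    2 * s ^ (-q) ≤ u ^ (-q) + v ^ (-q) := by
  have h1 : (u * v) ^ (-q / 2) = u ^ (-q / 2) * v ^ (-q / 2) :=
    Real.mul_rpow hu.le hv.le
  have h2 : u ^ (-q) = u ^ (-q / 2) * u ^ (-q / 2) := by
    rw [← Real.rpow_add hu]; ring_nf
  have h3 : v ^ (-q) = v ^ (-q / 2) * v ^ (-q / 2) := by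
    rw [← Real.rpow_add hv]; ring_nf
  have h4 : (s ^ 2 : ℝ) ^ (-q / 2) ≤ (u * v) ^ (-q / 2) :=
    Real.rpow_le_rpow_of_nonpos (by positivity) huv (by linarith)
  have h5 : (s ^ 2 : ℝ) ^ (-q / 2) = s ^ (-q) := by
    rw [← Real.rpow_natCast s 2, ← Real.rpow_mul hs.le]
    congr 1; ring
  nlinarith [sq_nonneg (u ^ (-q / 2) - v ^ (-q / 2))]

theorem stmt_6 (d : ℕ) (hd : 1 ≤ d) (α : ℝ) (hα : α ∈ Set.Ioo (0 : ℝ) 2)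
    (hdα : 2 < (d : ℝ) + α)
    (x y : EuclideanSpace ℝ (Fin d)) (hxy : 0 ≤ ⟪x, y⟫) (hne : x ≠ y) :
    2 * ((d : ℝ) + α - 2) * (‖x‖ ^ 2 + ‖y‖ ^ 2) ^ (-((d : ℝ) + α) / 2) * ⟪x, y⟫ ≤
      ‖x - y‖ ^ (-((d : ℝ) + α - 2)) - ‖x + y‖ ^ (-((d : ℝ) + α - 2)) := by
  set m : ℝ := (d : ℝ) + α with hm
  set p : ℝ := (m - 2) / 2 with hp
  have hp0 : 0 < p := by rw [hp]; linarith
  set s : ℝ := ‖x‖ ^ 2 + ‖y‖ ^ 2 with hs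
  set c : ℝ := ⟪x, y⟫ with hc
  have ha : ‖x - y‖ ^ 2 = s - 2 * c := by
    rw [hs, hc, norm_sub_sq_real]; ring
  have hb : ‖x + y‖ ^ 2 = s + 2 * c := by
    rw [hs, hc, norm_add_sq_real]; ring
  have hxyne : ‖x - y‖ ≠ 0 := by
    simpa [sub_eq_zero] using hne
  have ha0 : 0 < s - 2 * c := by
    rw [← ha]
    exact pow_pos ((norm_nonneg _).lt_of_ne' hxyne) 2
  have hs0 : 0 < s := by linarith
  set K : ℝ := 2 * p * s ^ (-p - 1) with hK
  set F : ℝ → ℝ := fun t => (s - t) ^ (-p) - (s + t) ^ (-p) - K * t with hF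
  have hderivF : ∀ t ∈ Set.Icc (0 : ℝ) (2 * c),
      HasDerivAt F (p * (s - t) ^ (-p - 1) + p * (s + t) ^ (-p - 1) - K) t := by
    intro t ht
    have hst : 0 < s - t := by
      cases' ht with h1 h2; linarith
    have hst' : 0 < s + t := by
      cases' ht with h1 h2; linarith
    have h1 : HasDerivAt (fun u : ℝ => s - u) (-1) t := by
      simpa using (hasDerivAt_id t).const_sub s
    have h2 : HasDerivAt (fun u : ℝ => (s - u) ^ (-p)) ((-p) * (s - t) ^ (-p - 1) * (-1)) t :=
      (Real.hasDerivAt_rpow_const (p := -p) (Or.inl hst.ne')).comp t h1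
    have h3 : HasDerivAt (fun u : ℝ => s + u) 1 t := by
      simpa using (hasDerivAt_id t).const_add s
    have h4 : HasDerivAt (fun u : ℝ => (s + u) ^ (-p)) ((-p) * (s + t) ^ (-p - 1) * 1) t :=
      (Real.hasDerivAt_rpow_const (p := -p) (Or.inl hst'.ne')).comp t h3
    have h5 : HasDerivAt (fun u : ℝ => K * u) K t := by
      simpa using (hasDerivAt_id t).const_mul K
    have h6 : HasDerivAt F ((-p) * (s - t) ^ (-p - 1) * (-1) - (-p) * (s + t) ^ (-p - 1) * 1 - K) t :=
      (h2.sub h4).sub h5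
    convert h6 using 1
    ring
  have hmono : MonotoneOn F (Set.Icc 0 (2 * c)) := by
    apply monotoneOn_of_deriv_nonneg (convex_Icc _ _)
    · intro t ht
      exact ((hderivF t ht).continuousAt).continuousWithinAt
    · intro t ht
      rw [interior_Icc] at ht
      exact ((hderivF t (Set.Ioo_subset_Icc_self ht)).differentiableAt).differentiableWithinAt
    · intro t ht
      rw [interior_Icc] at ht
      rw [(hderivF t (Set.Ioo_subset_Icc_self ht)).deriv]
      have hst : 0 < s - t := by cases' ht with h1 h2; linarith
      have hst' : 0 < s + t := by cases' ht with h1 h2; linarith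
      have huv : (s - t) * (s + t) ≤ s ^ 2 := by nlinarith [sq_nonneg t]
      have := aux_conv hst hst' hs0 huv (by linarith : (0:ℝ) ≤ p + 1)
      have he : -(p + 1) = -p - 1 := by ring
      rw [he] at this
      rw [hK]
      nlinarith
  have hmem0 : (0 : ℝ) ∈ Set.Icc (0 : ℝ) (2 * c) := by constructor <;> linarith
  have hmem1 : (2 * c) ∈ Set.Icc (0 : ℝ) (2 * c) := by constructor <;> linarith
  have hfin := hmono hmem0 hmem1 (by linarith : (0:ℝ) ≤ 2 * c)
  have hF0 : F 0 = 0 := by simp [hF]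
  have hF1 : F (2 * c) = (s - 2 * c) ^ (-p) - (s + 2 * c) ^ (-p) - K * (2 * c) := rfl
  rw [hF0, hF1] at hfin
  -- now convert the goal
  have eq1 : ‖x - y‖ ^ (-(m - 2)) = (s - 2 * c) ^ (-p) := by
    rw [← ha, ← Real.rpow_natCast ‖x - y‖ 2, ← Real.rpow_mul (norm_nonneg _)]
    congr 1
    rw [hp]; push_cast; ring
  have eq2 : ‖x + y‖ ^ (-(m - 2)) = (s + 2 * c) ^ (-p) := by
    rw [← hb, ← Real.rpow_natCast ‖x + y‖ 2, ← Real.rpow_mul (norm_nonneg _)]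
    congr 1
    rw [hp]; push_cast; ring
  have eq3 : (-m / 2 : ℝ) = -p - 1 := by rw [hp]; ring
  rw [show (-((d : ℝ) + α - 2)) = -(m - 2) by rw [hm],
    show (-((d : ℝ) + α) / 2) = -m / 2 by rw [hm], eq1, eq2, eq3]
  have : 2 * (m - 2) * s ^ (-p - 1) * c = K * (2 * c) := by rw [hK, hp]; ring
  rw [hm] at this ⊢
  linarith
end

section
/- Let α ∈ (0,1] and let V ∈ C²(ℝ) be such that e^{−V} ∈ L¹(ℝ; dx) ∩ C_b²(ℝ). Suppose that limsup_{|x|→∞} |x|³ e^{−V(x)} |V'(x)² − V''(x)| < ∞. Then the function u ↦ (−Δ)^{α/2} e^{−V(u)} is integrable on ℝ, i.e., ∫_ℝ |(−Δ)^{α/2} e^{−V(u)}| du < ∞; in particular, for every x ∈ ℝ the integral ∫_{−∞}^x (−Δ)^{α/2} e^{−V(u)} du is finite, so the one-dimensional fractional drift b(x) := −e^{V(x)} ∫_{−∞}^x (−Δ)^{α/2} e^{−V(u)} du is well defined. -/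
open MeasureTheory Real Filter

/-- The constant `c_{1,α} = 2^α Γ((1+α)/2)/(π^{1/2} |Γ(-α/2)|)`. -/
noncomputable def fracC (α : ℝ) : ℝ :=
  2 ^ α * Real.Gamma ((1 + α) / 2) / (Real.pi ^ ((1 : ℝ) / 2) * |Real.Gamma (-α / 2)|)

/-- The one-dimensional fractional Laplacian `(-Δ)^{α/2} g`, defined so that
`-(-Δ)^{α/2} g (x) = c_{1,α} ∫ (g(x+z) - g(x) - g'(x) z 1_{|z|≤1}) |z|^{-(1+α)} dz`. -/
noncomputable def fracLap1 (α : ℝ) (g : ℝ → ℝ) (x : ℝ) : ℝ :=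
  -(fracC α *
    ∫ z : ℝ, (g (x + z) - g x - deriv g x * z * (if |z| ≤ 1 then 1 else 0)) * |z| ^ (-(1 + α)))

/-- The one-dimensional fractional drift
`b(x) = -e^{V(x)} ∫_{-∞}^x (-Δ)^{α/2} e^{-V(u)} du`. -/
noncomputable def fracDrift1 (α : ℝ) (V : ℝ → ℝ) (x : ℝ) : ℝ :=
  -Real.exp (V x) * ∫ u in Set.Iic x, fracLap1 α (fun y => Real.exp (-(V y))) u

lemma my_taylor_bound (g : ℝ → ℝ) (hg : ContDiff ℝ 2 g) (x z : ℝ) :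
    |g (x + z) - g x - deriv g x * z| ≤
      |z| * ∫ s in Set.Ioc (-|z|) |z|, |deriv (deriv g) (x + s)| := by
  have h2 : ContDiff ℝ (1+1 : ℕ) g := by exact_mod_cast hg
  have h1 : ContDiff ℝ 1 (deriv g) := (contDiff_succ_iff_deriv.mp h2).2.2
  have hgd : Differentiable ℝ g := hg.differentiable (by norm_num)
  have hhd : Differentiable ℝ (deriv g) := (contDiff_one_iff_deriv.mp h1).1
  have hhc : Continuous (deriv g) := hhd.continuous
  have hkc : Continuous (deriv (deriv g)) := (contDiff_one_iff_deriv.mp h1).2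
  have FTC : ∀ (f : ℝ → ℝ), Differentiable ℝ f → Continuous (deriv f) → ∀ a b : ℝ,
      f (x + b) - f (x + a) = ∫ t in a..b, deriv f (x + t) := by
    intro f hfd hfc a b
    rw [intervalIntegral.integral_eq_sub_of_hasDerivAt (f := fun t => f (x + t))
      (fun t _ => by
        have h := (hfd (x + t)).hasDerivAt.comp t ((hasDerivAt_id t).const_add x)
        rw [mul_one] at h; exact h)
      (Continuous.intervalIntegrable (by fun_prop) a b)]
  have e1 : g (x + z) - g x - deriv g x * z
      = ∫ t in (0:ℝ)..z, (deriv g (x + t) - deriv g x) := by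
    rw [intervalIntegral.integral_sub
      (Continuous.intervalIntegrable (by fun_prop) 0 z) intervalIntegrable_const,
      intervalIntegral.integral_const, ← FTC g hgd hhc 0 z]
    simp [smul_eq_mul]
    ring
  have hCint : IntegrableOn (fun s => |deriv (deriv g) (x + s)|) (Set.Ioc (-|z|) |z|) :=
    Continuous.integrableOn_Ioc (by fun_prop)
  have key : ∀ t ∈ Set.uIoc 0 z, ‖deriv g (x + t) - deriv g x‖ ≤
      ∫ s in Set.Ioc (-|z|) |z|, |deriv (deriv g) (x + s)| := by
    intro t ht
    have hb : -|z| ≤ min 0 t ∧ max 0 t ≤ |z| := by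
      rcases Set.mem_uIoc.mp ht with ⟨h1', h2'⟩ | ⟨h1', h2'⟩ <;>
        constructor <;> simp [le_min_iff, max_le_iff] <;>
        nlinarith [neg_abs_le z, le_abs_self z, abs_nonneg z]
    have htz : Set.uIoc 0 t ⊆ Set.Ioc (-|z|) |z| := by
      rw [Set.uIoc]; exact Set.Ioc_subset_Ioc hb.1 hb.2
    have e2 : deriv g (x + t) - deriv g x = ∫ s in (0:ℝ)..t, deriv (deriv g) (x + s) := by
      have := FTC (deriv g) hhd hkc 0 t; rwa [add_zero] at this
    calc ‖deriv g (x + t) - deriv g x‖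
        = ‖∫ s in (0:ℝ)..t, deriv (deriv g) (x + s)‖ := by rw [e2]
      _ ≤ ∫ s in Set.uIoc 0 t, ‖deriv (deriv g) (x + s)‖ :=
          intervalIntegral.norm_integral_le_integral_norm_uIoc
      _ ≤ ∫ s in Set.Ioc (-|z|) |z|, |deriv (deriv g) (x + s)| := by
          simp only [Real.norm_eq_abs]
          exact setIntegral_mono_set hCint
            (Eventually.of_forall fun s => abs_nonneg _)
            (HasSubset.Subset.eventuallyLE htz)
  calc |g (x + z) - g x - deriv g x * z|
      = ‖∫ t in (0:ℝ)..z, (deriv g (x + t) - deriv g x)‖ := by rw [e1, Real.norm_eq_abs]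
    _ ≤ (∫ s in Set.Ioc (-|z|) |z|, |deriv (deriv g) (x + s)|) * |z - 0| :=
        intervalIntegral.norm_integral_le_of_norm_le_const key
    _ = |z| * _ := by rw [sub_zero, mul_comm]

lemma my_tail_integrable {c : ℝ} (hc : c < -1) {R : ℝ} (hR : 0 < R) :
    IntegrableOn (fun z : ℝ => |z| ^ c) {z : ℝ | R < |z|} := by
  have hS : {z : ℝ | R < |z|} = Set.Iio (-R) ∪ Set.Ioi R := by
    ext z
    simp only [Set.mem_setOf_eq, Set.mem_union, Set.mem_Iio, Set.mem_Ioi, lt_abs, lt_neg]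
    tauto
  have hIoi : IntegrableOn (fun z : ℝ => |z| ^ c) (Set.Ioi R) :=
    (integrableOn_Ioi_rpow_of_lt hc hR).congr_fun
      (fun z hz => by rw [abs_of_pos (hR.trans hz)]) measurableSet_Ioi
  have hIio : IntegrableOn (fun z : ℝ => |z| ^ c) (Set.Iio (-R)) := by
    have := (MeasurePreserving.integrableOn_comp_preimage
      (Measure.measurePreserving_neg (volume : Measure ℝ))
      (Homeomorph.neg ℝ).measurableEmbedding).2 hIoi
    have h1 : ((fun z : ℝ => |z| ^ c) ∘ (Neg.neg : ℝ → ℝ)) = fun z : ℝ => |z| ^ c := by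
      funext z; simp [Function.comp, abs_neg]
    have h2 : ((Neg.neg : ℝ → ℝ) ⁻¹' Set.Ioi R) = Set.Iio (-R) := by
      ext z; simp [lt_neg]
    rwa [h1, h2] at this
  rw [hS]
  exact hIio.union hIoi

lemma my_fracLap_integrable (α : ℝ) (hα : α ∈ Set.Ioc (0:ℝ) 1) (g : ℝ → ℝ)
    (hg : ContDiff ℝ 2 g) (hgi : Integrable g)
    (hki : Integrable (deriv (deriv g))) : Integrable (fracLap1 α g) := by
  have h2 : ContDiff ℝ (1+1 : ℕ) g := by exact_mod_cast hg
  have h1 : ContDiff ℝ 1 (deriv g) := (contDiff_succ_iff_deriv.mp h2).2.2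
  have hgc : Continuous g := hg.continuous
  have hhc : Continuous (deriv g) := (contDiff_one_iff_deriv.mp h1).1.continuous
  have hkc : Continuous (deriv (deriv g)) := (contDiff_one_iff_deriv.mp h1).2
  set k := deriv (deriv g) with hk
  set F : ℝ × ℝ → ℝ := fun p =>
    (g (p.1 + p.2) - g p.1 - deriv g p.1 * p.2 * (if |p.2| ≤ 1 then 1 else 0))
      * |p.2| ^ (-(1 + α)) with hF
  -- measurability
  have hind : Measurable fun p : ℝ × ℝ => (if |p.2| ≤ 1 then (1:ℝ) else 0) :=
    Measurable.ite (measurableSet_le measurable_snd.abs measurable_const)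
      measurable_const measurable_const
  have hFm : Measurable F := by
    apply Measurable.mul
    · exact (((hgc.comp (continuous_fst.add continuous_snd)).measurable.sub
        (hgc.comp continuous_fst).measurable).sub
        (((hhc.comp continuous_fst).measurable.mul measurable_snd).mul hind))
    · exact Measurable.pow (measurable_snd.abs) measurable_const
  -- constants
  set Ik : ENNReal := ∫⁻ x : ℝ, ENNReal.ofReal |k x| with hIkdef
  set I0 : ENNReal := ∫⁻ x : ℝ, ENNReal.ofReal |g x| with hI0def
  have hIk : Ik < ⊤ := by
    have := (hasFiniteIntegral_iff_norm _).mp hki.hasFiniteIntegral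
    simpa [Real.norm_eq_abs] using this
  have hI0 : I0 < ⊤ := by
    have := (hasFiniteIntegral_iff_norm _).mp hgi.hasFiniteIntegral
    simpa [Real.norm_eq_abs] using this
  set B : ℝ → ENNReal := fun z =>
    if |z| ≤ 1 then ENNReal.ofReal 2 * Ik
    else ENNReal.ofReal (|z| ^ (-(1 + α))) * (2 * I0) with hB
  have hmain : ∀ z : ℝ, (∫⁻ x : ℝ, ENNReal.ofReal ‖F (x, z)‖) ≤ B z := by
    intro z
    by_cases hz1 : |z| ≤ 1
    · by_cases hz0 : z = 0
      · subst hz0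
        have : ∀ x : ℝ, F (x, 0) = 0 := by intro x; simp [hF]
        simp only [this]
        simp [hB, zero_le]
      · have hzpos : 0 < |z| := abs_pos.mpr hz0
        have hrp : (0:ℝ) ≤ |z| ^ (-(1 + α)) := Real.rpow_nonneg (abs_nonneg z) _
        -- pointwise Taylor bound
        have hFnorm : ∀ x : ℝ, ‖F (x, z)‖ ≤
            (|z| * |z| ^ (-(1 + α))) * ∫ s in Set.Ioc (-|z|) |z|, |k (x + s)| := by
          intro x
          have e : ‖F (x, z)‖ = |g (x + z) - g x - deriv g x * z| * |z| ^ (-(1 + α)) := by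
            simp only [hF, Real.norm_eq_abs, abs_mul, if_pos hz1, mul_one,
              abs_of_nonneg hrp]
          rw [e]
          have := my_taylor_bound g hg x z
          calc |g (x + z) - g x - deriv g x * z| * |z| ^ (-(1 + α))
              ≤ (|z| * ∫ s in Set.Ioc (-|z|) |z|, |k (x + s)|) * |z| ^ (-(1 + α)) :=
                mul_le_mul_of_nonneg_right this hrp
            _ = (|z| * |z| ^ (-(1 + α))) * ∫ s in Set.Ioc (-|z|) |z|, |k (x + s)| := by ring
        have hkint : ∀ x : ℝ, IntegrableOn (fun s => |k (x + s)|) (Set.Ioc (-|z|) |z|) :=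
          fun x => Continuous.integrableOn_Ioc (by fun_prop)
        calc (∫⁻ x : ℝ, ENNReal.ofReal ‖F (x, z)‖)
            ≤ ∫⁻ x : ℝ, ENNReal.ofReal (|z| * |z| ^ (-(1 + α))) *
                (∫⁻ s in Set.Ioc (-|z|) |z|, ENNReal.ofReal |k (x + s)|) := by
              apply lintegral_mono
              intro x
              dsimp only
              rw [← ofReal_integral_eq_lintegral_ofReal (hkint x)
                (Eventually.of_forall fun s => abs_nonneg _),
                ← ENNReal.ofReal_mul (by positivity)]
              exact ENNReal.ofReal_le_ofReal (hFnorm x)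
          _ = ENNReal.ofReal (|z| * |z| ^ (-(1 + α))) *
                ∫⁻ x : ℝ, (∫⁻ s in Set.Ioc (-|z|) |z|, ENNReal.ofReal |k (x + s)|) :=
              lintegral_const_mul' _ _ ENNReal.ofReal_ne_top
          _ = ENNReal.ofReal (|z| * |z| ^ (-(1 + α))) *
                ∫⁻ s in Set.Ioc (-|z|) |z|, (∫⁻ x : ℝ, ENNReal.ofReal |k (x + s)|) := by
              rw [lintegral_lintegral_swap
                ((hkc.measurable.comp measurable_add).abs.ennreal_ofReal).aemeasurable]
          _ = ENNReal.ofReal (|z| * |z| ^ (-(1 + α))) * ∫⁻ _ in Set.Ioc (-|z|) |z|, Ik := by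
              congr 1
              apply setLIntegral_congr_fun measurableSet_Ioc
              exact fun s _ =>
                lintegral_add_right_eq_self (μ := volume) (fun x => ENNReal.ofReal |k x|) s
          _ = ENNReal.ofReal (|z| * |z| ^ (-(1 + α))) * (Ik * ENNReal.ofReal (2 * |z|)) := by
              rw [setLIntegral_const, Real.volume_Ioc]
              congr 2
              ring
          _ = (ENNReal.ofReal (|z| * |z| ^ (-(1 + α))) * ENNReal.ofReal (2 * |z|)) * Ik := by
              ring
          _ ≤ ENNReal.ofReal 2 * Ik := by
              apply mul_le_mul_left
              rw [← ENNReal.ofReal_mul (by positivity)]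
              apply ENNReal.ofReal_le_ofReal
              have e2 : |z| * |z| ^ (-(1 + α)) * (2 * |z|) = 2 * |z| ^ (2 + (-(1 + α))) := by
                rw [Real.rpow_add hzpos, Real.rpow_two]
                ring
              rw [e2]
              have : |z| ^ (2 + (-(1 + α))) ≤ 1 :=
                Real.rpow_le_one (abs_nonneg z) hz1 (by linarith [hα.2])
              linarith
          _ = B z := by rw [hB]; simp [if_pos hz1]
    · have hrp : (0:ℝ) ≤ |z| ^ (-(1 + α)) := Real.rpow_nonneg (abs_nonneg z) _
      have hFnorm : ∀ x : ℝ, ‖F (x, z)‖ ≤ (|g (x + z)| + |g x|) * |z| ^ (-(1 + α)) := by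
        intro x
        have e : ‖F (x, z)‖ = |g (x + z) - g x| * |z| ^ (-(1 + α)) := by
          simp only [hF, Real.norm_eq_abs, abs_mul, if_neg hz1, mul_zero, sub_zero,
            abs_of_nonneg hrp]
        rw [e]
        exact mul_le_mul_of_nonneg_right (abs_sub _ _) hrp
      calc (∫⁻ x : ℝ, ENNReal.ofReal ‖F (x, z)‖)
          ≤ ∫⁻ x : ℝ, ENNReal.ofReal (|z| ^ (-(1 + α))) *
              (ENNReal.ofReal |g (x + z)| + ENNReal.ofReal |g x|) := by
            apply lintegral_mono
            intro x
            dsimp only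
            rw [← ENNReal.ofReal_add (abs_nonneg _) (abs_nonneg _),
              ← ENNReal.ofReal_mul hrp]
            exact ENNReal.ofReal_le_ofReal (by rw [mul_comm]; exact hFnorm x)
        _ = ENNReal.ofReal (|z| ^ (-(1 + α))) *
              ∫⁻ x : ℝ, (ENNReal.ofReal |g (x + z)| + ENNReal.ofReal |g x|) :=
            lintegral_const_mul' _ _ ENNReal.ofReal_ne_top
        _ = ENNReal.ofReal (|z| ^ (-(1 + α))) * (I0 + I0) := by
            congr 1
            have hm : Measurable fun x : ℝ => ENNReal.ofReal |g (x + z)| :=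
              ((hgc.measurable.comp (measurable_add_const z)).abs).ennreal_ofReal
            rw [lintegral_add_left hm]
            congr 1
            exact lintegral_add_right_eq_self (fun x => ENNReal.ofReal |g x|) z
        _ = B z := by rw [hB]; simp [if_neg hz1, two_mul]
  -- integrability of B
  have hBfin : (∫⁻ z : ℝ, B z) < ⊤ := by
    have hBsplit : ∀ z : ℝ, B z =
        Set.indicator {z : ℝ | |z| ≤ 1} (fun _ => ENNReal.ofReal 2 * Ik) z +
        Set.indicator {z : ℝ | |z| ≤ 1}ᶜ
          (fun z => ENNReal.ofReal (|z| ^ (-(1 + α))) * (2 * I0)) z := by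
      intro z
      by_cases h : |z| ≤ 1 <;>
        simp [hB, Set.indicator, h]
    have hmeas1 : MeasurableSet {z : ℝ | |z| ≤ 1} :=
      measurableSet_le (measurable_id.abs) measurable_const
    rw [lintegral_congr hBsplit,
      lintegral_add_left ((measurable_const).indicator hmeas1),
      lintegral_indicator hmeas1, lintegral_indicator hmeas1.compl]
    have hfin1 : (∫⁻ _ in {z : ℝ | |z| ≤ 1}, ENNReal.ofReal 2 * Ik) < ⊤ := by
      rw [setLIntegral_const]
      have hset : {z : ℝ | |z| ≤ 1} = Set.Icc (-1 : ℝ) 1 := by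
        ext z; simp [abs_le]
      rw [hset, Real.volume_Icc]
      exact ENNReal.mul_lt_top (ENNReal.mul_lt_top ENNReal.ofReal_lt_top hIk)
        ENNReal.ofReal_lt_top
    have hfin2 : (∫⁻ z in {z : ℝ | |z| ≤ 1}ᶜ,
        ENNReal.ofReal (|z| ^ (-(1 + α))) * (2 * I0)) < ⊤ := by
      have hcompl : {z : ℝ | |z| ≤ 1}ᶜ = {z : ℝ | 1 < |z|} := by
        ext z; simp [not_le]
      have htail := my_tail_integrable (show -(1 + α) < -1 by linarith [hα.1]) one_pos
      have hJ : (∫⁻ z in {z : ℝ | 1 < |z|}, ENNReal.ofReal (|z| ^ (-(1 + α)))) < ⊤ := by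
        have h := (hasFiniteIntegral_iff_norm _).mp htail.hasFiniteIntegral
        refine lt_of_eq_of_lt ?_ h
        apply lintegral_congr
        intro z
        rw [Real.norm_eq_abs, abs_of_nonneg (Real.rpow_nonneg (abs_nonneg z) _)]
      calc (∫⁻ z in {z : ℝ | |z| ≤ 1}ᶜ, ENNReal.ofReal (|z| ^ (-(1 + α))) * (2 * I0))
          = (∫⁻ z in {z : ℝ | 1 < |z|}, ENNReal.ofReal (|z| ^ (-(1 + α)))) * (2 * I0) := by
            rw [hcompl, lintegral_mul_const' _ _ (by
              exact ENNReal.mul_ne_top (by norm_num) hI0.ne)]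
        _ < ⊤ := ENNReal.mul_lt_top hJ
              (ENNReal.mul_lt_top (by norm_num) hI0)
    exact ENNReal.add_lt_top.mpr ⟨hfin1, hfin2⟩
  -- integrability of F on the product
  have hFi : Integrable F (volume.prod volume) := by
    refine ⟨hFm.aestronglyMeasurable, ?_⟩
    rw [hasFiniteIntegral_iff_norm, lintegral_prod_symm _
      (hFm.norm.ennreal_ofReal).aemeasurable]
    calc (∫⁻ z : ℝ, ∫⁻ x : ℝ, ENNReal.ofReal ‖F (x, z)‖)
        ≤ ∫⁻ z : ℝ, B z := lintegral_mono hmain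
      _ < ⊤ := hBfin
  have hInt : Integrable (fun x : ℝ => ∫ z : ℝ, F (x, z)) volume := hFi.integral_prod_left
  have heq : fracLap1 α g = fun x : ℝ => -(fracC α * ∫ z : ℝ, F (x, z)) := rfl
  rw [heq]
  exact (hInt.const_mul (fracC α)).neg

theorem stmt_9 (α : ℝ) (hα : α ∈ Set.Ioc (0 : ℝ) 1)
    (V : ℝ → ℝ) (hV : ContDiff ℝ 2 V)
    (hL1 : Integrable (fun x => Real.exp (-(V x))))
    (hCb2 : ∃ M : ℝ, ∀ x : ℝ, Real.exp (-(V x)) ≤ M ∧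
      |deriv (fun y => Real.exp (-(V y))) x| ≤ M ∧
      |deriv (deriv (fun y => Real.exp (-(V y)))) x| ≤ M)
    (hlim : ∃ M R : ℝ, ∀ x : ℝ, R ≤ |x| →
      |x| ^ 3 * Real.exp (-(V x)) * |(deriv V x) ^ 2 - deriv (deriv V) x| ≤ M) :
    Integrable (fun u => fracLap1 α (fun y => Real.exp (-(V y))) u) ∧
      ∀ x : ℝ, IntegrableOn (fun u => fracLap1 α (fun y => Real.exp (-(V y))) u)
        (Set.Iic x) := by
  have hgC2 : ContDiff ℝ 2 (fun y => Real.exp (-(V y))) := Real.contDiff_exp.comp hV.neg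
  have hVd : Differentiable ℝ V := hV.differentiable (by norm_num)
  have hV2 : ContDiff ℝ (1+1 : ℕ) V := by exact_mod_cast hV
  have hV1 : ContDiff ℝ 1 (deriv V) := (contDiff_succ_iff_deriv.mp hV2).2.2
  have hVd' : Differentiable ℝ (deriv V) := (contDiff_one_iff_deriv.mp hV1).1
  have hVkc : Continuous (deriv (deriv V)) := (contDiff_one_iff_deriv.mp hV1).2
  have hd1 : ∀ x : ℝ, HasDerivAt (fun y => Real.exp (-(V y)))
      (Real.exp (-(V x)) * -(deriv V x)) x := by
    intro x
    have h := (Real.hasDerivAt_exp (-(V x))).comp x ((hVd x).hasDerivAt.neg)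
    exact h
  have hderiv1 : deriv (fun y => Real.exp (-(V y)))
      = fun x => Real.exp (-(V x)) * -(deriv V x) := funext fun x => (hd1 x).deriv
  have hd2 : ∀ x : ℝ, HasDerivAt (fun x => Real.exp (-(V x)) * -(deriv V x))
      (Real.exp (-(V x)) * ((deriv V x) ^ 2 - deriv (deriv V) x)) x := by
    intro x
    have h := (hd1 x).fun_mul ((hVd' x).hasDerivAt.fun_neg)
    refine h.congr_deriv ?_
    ring
  have hderiv2 : deriv (deriv (fun y => Real.exp (-(V y))))
      = fun x => Real.exp (-(V x)) * ((deriv V x) ^ 2 - deriv (deriv V) x) := by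
    rw [hderiv1]; exact funext fun x => (hd2 x).deriv
  have hkc : Continuous (deriv (deriv (fun y => Real.exp (-(V y))))) := by
    rw [hderiv2]
    exact (Real.continuous_exp.comp hVd.continuous.neg).mul
      (((hVd'.continuous).pow 2).sub hVkc)
  -- integrability of the second derivative
  obtain ⟨M, R, hM⟩ := hlim
  set R' : ℝ := max R 1 with hR'
  have hR'1 : (1:ℝ) ≤ R' := le_max_right _ _
  have hR'0 : (0:ℝ) < R' := by linarith
  have hmeasS : MeasurableSet {x : ℝ | R' < |x|} :=
    measurableSet_lt measurable_const measurable_id.abs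
  have hMnn : (0:ℝ) ≤ M := by
    have h1 : R ≤ |(|R| + 1)| := by
      rw [abs_of_pos (by positivity)]
      linarith [le_abs_self R]
    exact le_trans (by positivity) (hM (|R| + 1) h1)
  have htail : IntegrableOn (fun x : ℝ => M * |x| ^ (-(3:ℝ))) {x : ℝ | R' < |x|} :=
    (my_tail_integrable (show (-3:ℝ) < -1 by norm_num) hR'0).const_mul M
  have hkS : IntegrableOn (deriv (deriv (fun y => Real.exp (-(V y))))) {x : ℝ | R' < |x|} := by
    apply Integrable.mono htail (hkc.aestronglyMeasurable.restrict)
    rw [ae_restrict_iff' hmeasS]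
    refine Eventually.of_forall fun x hx => ?_
    have hx' : R' < |x| := hx
    have h1x : (1:ℝ) ≤ |x| := le_trans hR'1 hx'.le
    have hRx : R ≤ |x| := le_trans (le_max_left R 1) hx'.le
    have hb := hM x hRx
    have hkx : |deriv (deriv (fun y => Real.exp (-(V y)))) x|
        = Real.exp (-(V x)) * |(deriv V x) ^ 2 - deriv (deriv V) x| := by
      rw [hderiv2]
      rw [abs_mul, abs_of_pos (Real.exp_pos _)]
    have h3 : |x| ^ 3 * |deriv (deriv (fun y => Real.exp (-(V y)))) x| ≤ M := by
      rw [hkx, ← mul_assoc]; exact hb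
    have hx3 : (0:ℝ) < |x| ^ 3 := by positivity
    rw [Real.norm_eq_abs, Real.norm_eq_abs]
    have e : |x| ^ (-(3:ℝ)) = (|x| ^ 3)⁻¹ := by
      rw [Real.rpow_neg (abs_nonneg x)]
      norm_cast
    have hle : |deriv (deriv (fun y => Real.exp (-(V y)))) x| ≤ M * |x| ^ (-(3:ℝ)) := by
      rw [e, ← div_eq_mul_inv, le_div_iff₀ hx3, mul_comm]
      exact h3
    exact le_trans hle (le_abs_self _)
  have hki : Integrable (deriv (deriv (fun y => Real.exp (-(V y))))) := by
    rw [← integrableOn_univ]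
    have huniv : (Set.univ : Set ℝ) = Set.Icc (-R') R' ∪ {x : ℝ | R' < |x|} := by
      ext x
      simp only [Set.mem_univ, Set.mem_union, Set.mem_Icc, Set.mem_setOf_eq, true_iff,
        ← abs_le]
      exact le_or_gt |x| R'
    rw [huniv]
    exact (hkc.integrableOn_Icc).union hkS
  have main : Integrable (fun u => fracLap1 α (fun y => Real.exp (-(V y))) u) :=
    my_fracLap_integrable α hα _ hgC2 hL1 hki
  exact ⟨main, fun x => main.integrableOn⟩
end

section
/- Let α ∈ (0,1] and let V ∈ C²(ℝ) be such that e^{−V} ∈ L¹(ℝ; dx) ∩ C_b²(ℝ). Suppose that limsup_{|x|→∞} |x|³ e^{−V(x)} |V'(x)² − V''(x)| < ∞. Then ∫_ℝ (−Δ)^{α/2} e^{−V(u)} du = 0. -/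
open MeasureTheory Real Filter

/-- Integrability of the tail `|z|^a` for `a < -1`. -/
lemma tail_integrable {a : ℝ} (ha : a < -1) {c : ℝ} (hc : 0 < c) :
    Integrable (fun z : ℝ => if |z| ≤ c then 0 else |z| ^ a) := by
  have h1 : IntegrableOn (fun z : ℝ => |z| ^ a) (Set.Ioi c) := by
    refine (integrableOn_Ioi_rpow_of_lt ha hc).congr_fun (fun z hz => ?_) measurableSet_Ioi
    rw [abs_of_pos (hc.trans hz)]
  have h1' : Integrable ((Set.Ioi c).indicator fun z : ℝ => |z| ^ a) :=
    (integrable_indicator_iff measurableSet_Ioi).2 h1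
  have h2' : Integrable ((Set.Iio (-c)).indicator fun z : ℝ => |z| ^ a) := by
    have h := h1'.comp_neg
    refine h.congr (Filter.Eventually.of_forall fun z => ?_)
    simp only [Set.indicator_apply, Set.mem_Ioi, Set.mem_Iio, abs_neg]
    by_cases hz : z < -c
    · rw [if_pos (by linarith), if_pos hz]
    · rw [if_neg (by intro hc; exact hz (by linarith)), if_neg hz]
  refine (h2'.add h1').congr (Filter.Eventually.of_forall fun z => ?_)
  simp only [Pi.add_apply, Set.indicator_apply, Set.mem_Iio, Set.mem_Ioi]
  by_cases hz : |z| ≤ c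
  · obtain ⟨hz1, hz2⟩ := abs_le.1 hz
    rw [if_neg (by intro hc; linarith), if_neg (by intro hc; linarith), if_pos hz, add_zero]
  · rw [if_neg hz]
    rcases lt_abs.1 (not_le.1 hz) with h | h
    · rw [if_neg (by intro hc; linarith), if_pos h, zero_add]
    · rw [if_pos (by linarith), if_neg (by intro hc; linarith), add_zero]

theorem stmt_10 (α : ℝ) (hα : α ∈ Set.Ioc (0 : ℝ) 1)
    (V : ℝ → ℝ) (hV : ContDiff ℝ 2 V)
    (hL1 : Integrable (fun x => Real.exp (-(V x))))
    (hCb2 : ∃ M : ℝ, ∀ x : ℝ, Real.exp (-(V x)) ≤ M ∧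
      |deriv (fun y => Real.exp (-(V y))) x| ≤ M ∧
      |deriv (deriv (fun y => Real.exp (-(V y)))) x| ≤ M)
    (hlim : ∃ M R : ℝ, ∀ x : ℝ, R ≤ |x| →
      |x| ^ 3 * Real.exp (-(V x)) * |(deriv V x) ^ 2 - deriv (deriv V) x| ≤ M) :
    ∫ u : ℝ, fracLap1 α (fun y => Real.exp (-(V y))) u = 0 := by
  obtain ⟨hα0, hα1⟩ := hα
  set g : ℝ → ℝ := fun y => Real.exp (-(V y)) with hgdef
  obtain ⟨M, hM⟩ := hCb2
  obtain ⟨M₂, R, hM₂⟩ := hlim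
  -- Basic differentiability facts
  have hgpos : ∀ x, 0 < g x := fun x => Real.exp_pos _
  have hVd : Differentiable ℝ V := hV.differentiable two_ne_zero
  have hV2 : ContDiff ℝ ((1 : ℕ) + 1) V := by
    convert hV using 2 <;> norm_num
  have hV1 : Differentiable ℝ (deriv V) :=
    ((contDiff_succ_iff_deriv.1 hV2).2.2).differentiable (by simp)
  have hg2 : ContDiff ℝ 2 g := (hV.neg).exp
  have hgd : Differentiable ℝ g := hg2.differentiable two_ne_zero
  have hasDerivg : ∀ x, HasDerivAt g (-(deriv V x) * g x) x := by
    intro x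
    have h := (((hVd x).hasDerivAt).neg).exp
    refine h.congr_deriv ?_
    simp only [hgdef, Pi.neg_apply]
    ring
  have hderivg : deriv g = fun x => -(deriv V x) * g x := funext fun x => (hasDerivg x).deriv
  have hasDerivg' : ∀ x, HasDerivAt (deriv g)
      (((deriv V x) ^ 2 - deriv (deriv V) x) * g x) x := by
    intro x
    rw [hderivg]
    have h := (((hV1 x).hasDerivAt).neg).mul (hasDerivg x)
    refine h.congr_deriv ?_
    simp only [Pi.neg_apply]
    ring
  have hg''_eq : ∀ x, deriv (deriv g) x = ((deriv V x) ^ 2 - deriv (deriv V) x) * g x :=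
    fun x => (hasDerivg' x).deriv
  have hcont_g : Continuous g := hg2.continuous
  have hcont_g' : Continuous (deriv g) := hg2.continuous_deriv one_le_two
  -- Constants
  set M₂' : ℝ := max M₂ 0 with hM₂'def
  set R₁ : ℝ := max R 1 with hR₁def
  have hR₁1 : (1 : ℝ) ≤ R₁ := le_max_right _ _
  have hM₂'0 : 0 ≤ M₂' := le_max_right _ _
  have hM0 : 0 < M := lt_of_lt_of_le (hgpos 0) (hM 0).1
  -- decay of the second derivative
  have hgg : ∀ x : ℝ, R₁ ≤ |x| → |deriv (deriv g) x| ≤ M₂' / |x| ^ 3 := by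
    intro x hx
    have hxpos : (0 : ℝ) < |x| := lt_of_lt_of_le one_pos (hR₁1.trans hx)
    have h3 : (0 : ℝ) < |x| ^ 3 := by positivity
    have h := hM₂ x ((le_max_left R 1).trans hx)
    rw [le_div_iff₀ h3]
    rw [hg''_eq, abs_mul, abs_of_pos (hgpos x)]
    calc |(deriv V x) ^ 2 - deriv (deriv V) x| * g x * |x| ^ 3
        = |x| ^ 3 * g x * |(deriv V x) ^ 2 - deriv (deriv V) x| := by ring
      _ ≤ M₂ := h
      _ ≤ M₂' := le_max_left _ _
  -- The dominating function for the second derivative on unit neighborhoods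
  set D : ℝ → ℝ := fun u => if |u| ≤ R₁ + 1 then M else (8 * M₂') * |u| ^ (-3 : ℝ) with hDdef
  have habs3 : ∀ u : ℝ, |u| ^ (-3 : ℝ) = (|u| ^ 3)⁻¹ := by
    intro u
    rw [show (-3 : ℝ) = -((3 : ℕ) : ℝ) by norm_num, Real.rpow_neg (abs_nonneg u),
      Real.rpow_natCast]
  have hD_nonneg : ∀ u, 0 ≤ D u := by
    intro u
    by_cases h : |u| ≤ R₁ + 1
    · simp [hDdef, h, hM0.le]
    · simp only [hDdef, if_neg h]
      exact mul_nonneg (by positivity) (Real.rpow_nonneg (abs_nonneg u) _)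
  have hD_bound : ∀ u w : ℝ, |w - u| ≤ 1 → |deriv (deriv g) w| ≤ D u := by
    intro u w hw
    by_cases h : |u| ≤ R₁ + 1
    · simp only [hDdef, if_pos h]
      exact (hM w).2.2
    · simp only [hDdef, if_neg h]
      push_neg at h
      have hu2 : (2 : ℝ) ≤ |u| := by linarith
      have hwu : |u| - 1 ≤ |w| := by
        have := abs_sub_abs_le_abs_sub u w
        rw [abs_sub_comm] at hw
        linarith
      have hwR : R₁ ≤ |w| := by linarith
      have hw3 : (0 : ℝ) < |w| ^ 3 := pow_pos (lt_of_lt_of_le one_pos (hR₁1.trans hwR)) 3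
      have hu3 : (0 : ℝ) < |u| ^ 3 := pow_pos (by linarith) 3
      calc |deriv (deriv g) w| ≤ M₂' / |w| ^ 3 := hgg w hwR
        _ ≤ (8 * M₂') * |u| ^ (-3 : ℝ) := by
            rw [habs3, ← div_eq_mul_inv, div_le_div_iff₀ hw3 hu3]
            have hb : |u| ≤ 2 * |w| := by linarith
            have h8 : |u| ^ 3 ≤ 8 * |w| ^ 3 := by
              calc |u| ^ 3 ≤ (2 * |w|) ^ 3 := pow_le_pow_left₀ (abs_nonneg u) hb 3
                _ = 8 * |w| ^ 3 := by ring
            nlinarith [mul_le_mul_of_nonneg_left h8 hM₂'0]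
  -- Integrability of D
  have hD_int : Integrable D := by
    have h1 : Integrable ((Set.Icc (-(R₁ + 1)) (R₁ + 1)).indicator fun _ : ℝ => M) := by
      rw [integrable_indicator_iff measurableSet_Icc]
      exact integrableOn_const measure_Icc_lt_top.ne
    have h2 : Integrable (fun u : ℝ => (8 * M₂') *
        (if |u| ≤ R₁ + 1 then 0 else |u| ^ (-3 : ℝ))) :=
      (tail_integrable (by norm_num) (by linarith : (0 : ℝ) < R₁ + 1)).const_mul _
    refine (h1.add h2).congr (Filter.Eventually.of_forall fun u => ?_)
    simp only [Pi.add_apply, Set.indicator_apply, Set.mem_Icc]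
    by_cases h : |u| ≤ R₁ + 1
    · obtain ⟨h1, h2⟩ := abs_le.1 h
      rw [if_pos ⟨h1, h2⟩, if_pos h]
      simp [hDdef, h]
    · rw [if_neg (fun hc => h (abs_le.2 ⟨hc.1, hc.2⟩)), if_neg h]
      simp [hDdef, h]
  -- Taylor-type second order bound
  have taylor : ∀ u z : ℝ, |z| ≤ 1 → |g (u + z) - g u - deriv g u * z| ≤ D u * z ^ 2 := by
    intro u z hz
    have hus : u ∈ Set.Icc (u - 1) (u + 1) := by constructor <;> linarith
    -- Lipschitz bound for deriv g on [u-1, u+1]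
    have hlip : ∀ y ∈ Set.Icc (u - 1) (u + 1), |deriv g y - deriv g u| ≤ D u * |y - u| := by
      intro y hy
      have h := (convex_Icc (u - 1) (u + 1)).norm_image_sub_le_of_norm_hasDerivWithin_le
        (f := deriv g) (f' := deriv (deriv g))
        (fun w _ => ((hg''_eq w ▸ hasDerivg' w : HasDerivAt (deriv g) (deriv (deriv g) w) w)).hasDerivWithinAt)
        (fun w hw => hD_bound u w (by
          rw [Set.mem_Icc] at hw
          rw [abs_sub_le_iff]; constructor <;> linarith)) hus hy
      simpa using h
    set φ : ℝ → ℝ := fun t => g (u + t * z) - g u - deriv g u * (t * z) with hφdef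
    have hφder : ∀ t : ℝ, HasDerivAt φ ((deriv g (u + t * z) - deriv g u) * z) t := by
      intro t
      have hin : HasDerivAt (fun t : ℝ => u + t * z) z t := by
        simpa using ((hasDerivAt_id t).mul_const z).const_add u
      have h1 : HasDerivAt (fun t : ℝ => g (u + t * z)) (deriv g (u + t * z) * z) t :=
        by have := (hgd (u + t * z)).hasDerivAt.comp t hin; exact this
      have h2 : HasDerivAt (fun t : ℝ => deriv g u * (t * z)) (deriv g u * z) t := by
        simpa using (((hasDerivAt_id t).mul_const z).const_mul (deriv g u))
      have := (h1.sub_const (g u)).sub h2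
      refine this.congr_deriv ?_
      ring
    have hφbound : ∀ t ∈ Set.Icc (0 : ℝ) 1,
        ‖(deriv g (u + t * z) - deriv g u) * z‖ ≤ D u * z ^ 2 := by
      intro t ht
      rw [Set.mem_Icc] at ht
      have htz : |t * z| ≤ 1 := by
        rw [abs_mul, abs_of_nonneg ht.1]
        calc t * |z| ≤ 1 * 1 := by
              apply mul_le_mul ht.2 hz (abs_nonneg z) zero_le_one
          _ = 1 := one_mul 1
      have hmem : u + t * z ∈ Set.Icc (u - 1) (u + 1) := by
        obtain ⟨h1, h2⟩ := abs_le.1 htz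
        constructor <;> linarith
      have h := hlip (u + t * z) hmem
      rw [add_sub_cancel_left] at h
      rw [Real.norm_eq_abs, abs_mul]
      calc |deriv g (u + t * z) - deriv g u| * |z| ≤ (D u * |t * z|) * |z| := by
            apply mul_le_mul_of_nonneg_right h (abs_nonneg z)
        _ ≤ D u * z ^ 2 := by
            rw [abs_mul, abs_of_nonneg ht.1]
            have : t * |z| * |z| ≤ z ^ 2 := by
              rw [← sq_abs]
              nlinarith [abs_nonneg z, ht.1, ht.2, sq_nonneg (|z|)]
            nlinarith [hD_nonneg u, abs_nonneg z]
    have h := (convex_Icc (0 : ℝ) 1).norm_image_sub_le_of_norm_hasDerivWithin_le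
      (f := φ) (f' := fun t => (deriv g (u + t * z) - deriv g u) * z)
      (fun t _ => (hφder t).hasDerivWithinAt) hφbound
      (Set.left_mem_Icc.2 zero_le_one) (Set.right_mem_Icc.2 zero_le_one)
    have hφ1 : φ 1 = g (u + z) - g u - deriv g u * z := by simp [hφdef]
    have hφ0 : φ 0 = 0 := by simp [hφdef]
    rw [hφ1, hφ0, sub_zero] at h
    simpa using h
  -- Integrability of deriv g
  have hg'int : Integrable (deriv g) := by
    have h1 : Integrable (fun u => g (u + 1) - g u - deriv g u * 1) := by
      refine hD_int.mono' ?_ (Filter.Eventually.of_forall fun u => ?_)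
      · exact (((hcont_g.comp (continuous_id.add continuous_const)).sub hcont_g).sub
          (hcont_g'.mul continuous_const)).aestronglyMeasurable
      · rw [Real.norm_eq_abs]
        have := taylor u 1 (by norm_num)
        simpa using this
    have h2 : deriv g = fun u => (g (u + 1) - g u) - (g (u + 1) - g u - deriv g u * 1) := by
      funext u; ring
    rw [h2]
    exact ((hL1.comp_add_right 1).sub hL1).sub h1
  have hg'zero : ∫ u, deriv g u = 0 :=
    integral_eq_zero_of_hasDerivAt_of_integrable (fun x => (hgd x).hasDerivAt) hg'int hL1
  -- the kernel
  set ker : ℝ → ℝ := fun z => |z| ^ (-(1 + α)) with hkerdef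
  have hker_nonneg : ∀ z, 0 ≤ ker z := fun z => Real.rpow_nonneg (abs_nonneg z) _
  have hker_meas : Measurable ker := by fun_prop
  have hker1 : ∀ z : ℝ, |z| ≤ 1 → z ^ 2 * ker z ≤ 1 := by
    intro z hz
    rcases eq_or_ne z 0 with rfl | hz0
    · simp [hkerdef]
    · have hzpos : (0 : ℝ) < |z| := abs_pos.2 hz0
      have : z ^ 2 * ker z = |z| ^ ((1 : ℝ) - α) := by
        rw [hkerdef]
        have h2 : (z : ℝ) ^ 2 = |z| ^ ((2 : ℕ) : ℝ) := by
          rw [Real.rpow_natCast, sq_abs]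
        rw [h2, ← Real.rpow_add hzpos]
        congr 1
        push_cast
        ring
      rw [this]
      exact Real.rpow_le_one (abs_nonneg z) hz (by linarith)
  -- the full integrand on the product space
  set K : ℝ × ℝ → ℝ := fun p =>
    (g (p.2 + p.1) - g p.2 - deriv g p.2 * p.1 * (if |p.1| ≤ 1 then 1 else 0)) * ker p.1
    with hKdef
  -- split into small and large parts
  set K₁ : ℝ × ℝ → ℝ := fun p =>
    (if |p.1| ≤ 1 then 1 else 0) * ((g (p.2 + p.1) - g p.2 - deriv g p.2 * p.1) * ker p.1)
    with hK₁def
  set φ₂ : ℝ → ℝ := fun z => (if |z| ≤ 1 then 0 else 1) * ker z with hφ₂def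
  have hφ₂_nonneg : ∀ z, 0 ≤ φ₂ z := by
    intro z
    by_cases h : |z| ≤ 1 <;> simp [hφ₂def, h, hker_nonneg z]
  have hφ₂_meas : Measurable φ₂ := by
    apply Measurable.mul _ hker_meas
    exact Measurable.ite (measurableSet_le (by fun_prop) measurable_const)
      measurable_const measurable_const
  have hφ₂_int : Integrable φ₂ := by
    refine (tail_integrable (by linarith : -(1 + α) < -1) one_pos).congr
      (Filter.Eventually.of_forall fun z => ?_)
    by_cases h : |z| ≤ 1 <;> simp [hφ₂def, h, hkerdef]
  set K₂ : ℝ × ℝ → ℝ := fun p => φ₂ p.1 * g (p.2 + p.1) - φ₂ p.1 * g p.2 with hK₂def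
  have hsplit : K = fun p => K₁ p + K₂ p := by
    funext p
    by_cases h : |p.1| ≤ 1 <;> simp [hKdef, hK₁def, hK₂def, hφ₂def, h] <;> ring
  -- measurability helpers on the product
  have hmeas_shift : Measurable fun p : ℝ × ℝ => g (p.2 + p.1) :=
    (hcont_g.comp (continuous_snd.add continuous_fst)).measurable
  have hmeas_ind : MeasurableSet {p : ℝ × ℝ | |p.1| ≤ 1} :=
    measurableSet_le (by fun_prop) measurable_const
  -- integrability of K₁
  have hK₁int : Integrable K₁ (volume.prod volume) := by
    have hB : Integrable (fun p : ℝ × ℝ =>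
        (if |p.1| ≤ 1 then (1 : ℝ) else 0) * D p.2) (volume.prod volume) := by
      refine Integrable.mul_prod (f := fun z : ℝ => if |z| ≤ 1 then (1 : ℝ) else 0) (g := D)
        ?_ hD_int
      have hind : Integrable ((Set.Icc (-1 : ℝ) 1).indicator fun _ => (1 : ℝ)) :=
        (integrable_indicator_iff measurableSet_Icc).2
          (integrableOn_const measure_Icc_lt_top.ne)
      refine hind.congr (Filter.Eventually.of_forall fun z => ?_)
      by_cases h : |z| ≤ 1
      · rw [Set.indicator_of_mem (by rw [Set.mem_Icc]; exact abs_le.1 h)]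
        simp [h]
      · rw [Set.indicator_of_notMem (by rw [Set.mem_Icc]; intro hc; exact h (abs_le.2 hc))]
        simp [h]
    refine hB.mono' ?_ (Filter.Eventually.of_forall fun p => ?_)
    · apply Measurable.aestronglyMeasurable
      apply Measurable.mul
      · exact Measurable.ite hmeas_ind measurable_const measurable_const
      · exact ((hmeas_shift.sub (hcont_g.measurable.comp measurable_snd)).sub
          ((hcont_g'.measurable.comp measurable_snd).mul measurable_fst)).mul
          (hker_meas.comp measurable_fst)
    · by_cases h : |p.1| ≤ 1
      · simp only [hK₁def, if_pos h, one_mul, Real.norm_eq_abs, abs_mul,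
          abs_of_nonneg (hker_nonneg p.1)]
        calc |g (p.2 + p.1) - g p.2 - deriv g p.2 * p.1| * ker p.1
            ≤ (D p.2 * p.1 ^ 2) * ker p.1 :=
              mul_le_mul_of_nonneg_right (taylor p.2 p.1 h) (hker_nonneg p.1)
          _ = D p.2 * (p.1 ^ 2 * ker p.1) := by ring
          _ ≤ D p.2 * 1 := mul_le_mul_of_nonneg_left (hker1 p.1 h) (hD_nonneg p.2)
          _ = D p.2 := mul_one _
      · simp [hK₁def, h, hD_nonneg p.2]
  -- integrability of K₂
  have hK₂bint : Integrable (fun p : ℝ × ℝ => φ₂ p.1 * g p.2) (volume.prod volume) :=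
    Integrable.mul_prod hφ₂_int hL1
  have hK₂aint : Integrable (fun p : ℝ × ℝ => φ₂ p.1 * g (p.2 + p.1)) (volume.prod volume) := by
    have hmeas : AEStronglyMeasurable (fun p : ℝ × ℝ => φ₂ p.1 * g (p.2 + p.1))
        (volume.prod volume) :=
      ((hφ₂_meas.comp measurable_fst).mul hmeas_shift).aestronglyMeasurable
    rw [integrable_prod_iff hmeas]
    constructor
    · refine Filter.Eventually.of_forall fun z => ?_
      show Integrable fun u : ℝ => φ₂ z * g (u + z)
      exact (hL1.comp_add_right z).const_mul _
    · have heq : ∀ z : ℝ, (∫ u : ℝ, ‖φ₂ z * g (u + z)‖) = φ₂ z * ∫ u : ℝ, g u := by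
        intro z
        have h1 : ∀ u : ℝ, ‖φ₂ z * g (u + z)‖ = φ₂ z * g (u + z) := fun u =>
          abs_of_nonneg (mul_nonneg (hφ₂_nonneg z) (hgpos (u + z)).le)
        simp_rw [h1]
        rw [integral_const_mul, integral_add_right_eq_self (μ := volume) g z]
      simp_rw [heq]
      exact hφ₂_int.mul_const _
  have hK₂int : Integrable K₂ (volume.prod volume) := by exact hK₂aint.sub hK₂bint
  have hKint : Integrable K (volume.prod volume) := by
    rw [hsplit]; exact hK₁int.add hK₂int
  -- swap
  have hKswap : Integrable (fun p : ℝ × ℝ => K (p.2, p.1)) (volume.prod volume) := hKint.swap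
  -- the inner integral in u vanishes for every z
  have inner_zero : ∀ z : ℝ,
      (∫ u : ℝ, (g (u + z) - g u - deriv g u * z * (if |z| ≤ 1 then 1 else 0)) * ker z) = 0 := by
    intro z
    rw [integral_mul_const]
    have hint1 : Integrable (fun u : ℝ => g (u + z)) := hL1.comp_add_right z
    have hint3 : Integrable (fun u : ℝ => deriv g u * z * (if |z| ≤ 1 then 1 else 0)) :=
      (hg'int.mul_const z).mul_const _
    have hsub1 : Integrable (fun u : ℝ => g (u + z) - g u) := by exact hint1.sub hL1
    rw [integral_sub hsub1 hint3, integral_sub hint1 hL1,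
      integral_add_right_eq_self (μ := volume) g z]
    have h3 : (∫ u : ℝ, deriv g u * z * (if |z| ≤ 1 then 1 else 0)) = 0 := by
      rw [integral_mul_const, integral_mul_const, hg'zero]
      ring
    rw [h3]
    ring
  -- conclude
  simp only [fracLap1]
  rw [integral_neg, neg_eq_zero]
  have : (∫ u : ℝ, fracC α * ∫ z : ℝ,
      (g (u + z) - g u - deriv g u * z * (if |z| ≤ 1 then 1 else 0)) * |z| ^ (-(1 + α))) =
      fracC α * ∫ u : ℝ, ∫ z : ℝ,
      (g (u + z) - g u - deriv g u * z * (if |z| ≤ 1 then 1 else 0)) * ker z := by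
    rw [integral_const_mul]
  rw [this]
  have hswap := integral_integral_swap
    (f := fun u z => (g (u + z) - g u - deriv g u * z * (if |z| ≤ 1 then 1 else 0)) * ker z)
    hKswap
  rw [hswap]
  simp_rw [inner_zero]
  simp
end

section
/- Let α ∈ (0,1] and let V ∈ C²(ℝ) be such that e^{−V} ∈ L¹(ℝ; dx) ∩ C_b²(ℝ). Suppose that limsup_{|x|→∞} |x|³ e^{−V(x)} |V'(x)² − V''(x)| < ∞. Then there exists a constant c > 0 such that for all x ∈ ℝ and all ε ∈ (0,1]: | ∫_{{y : |y−x| ≥ ε}} (e^{−V(y)} − e^{−V(x)}) |y−x|^{−(1+α)} dy | ≤ c ( (1+|x|)^{−(1+α)} + e^{−V(x)} ). -/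
open MeasureTheory Real Filter
open Set

section helpers

lemma neg_emb' : MeasurableEmbedding (fun x : ℝ => -x) :=
  (Homeomorph.neg ℝ).isClosedEmbedding.measurableEmbedding

lemma set_eq' (c : ℝ) : {z : ℝ | c ≤ |z|} = Iic (-c) ∪ Ici c := by
  ext z; simp [le_abs, le_neg]; tauto

lemma integrableOn_w_Ici' {α c : ℝ} (hα : 0 < α) (hc : 0 < c) :
    IntegrableOn (fun z : ℝ => |z| ^ (-(1+α))) (Ici c) := by
  rw [integrableOn_Ici_iff_integrableOn_Ioi]
  have h := integrableOn_Ioi_rpow_of_lt (a := -(1+α)) (by linarith) hc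
  refine h.congr_fun (fun z hz => ?_) measurableSet_Ioi
  rw [abs_of_pos (hc.trans hz)]

lemma integrableOn_w_Iic' {α c : ℝ} (hα : 0 < α) (hc : 0 < c) :
    IntegrableOn (fun z : ℝ => |z| ^ (-(1+α))) (Iic (-c)) := by
  have h := integrableOn_w_Ici' (α := α) hα hc
  rw [← Measure.map_neg_eq_self (volume : Measure ℝ)]
  rw [neg_emb'.integrableOn_map_iff]
  have : ((fun x : ℝ => -x) ⁻¹' Iic (-c)) = Ici c := by ext z; simp [neg_le]
  rw [this]
  refine h.congr_fun (fun z hz => ?_) measurableSet_Ici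
  simp [Function.comp]

lemma integrableOn_w' {α c : ℝ} (hα : 0 < α) (hc : 0 < c) :
    IntegrableOn (fun z : ℝ => |z| ^ (-(1+α))) {z : ℝ | c ≤ |z|} := by
  rw [set_eq']
  exact (integrableOn_w_Iic' hα hc).union (integrableOn_w_Ici' hα hc)

lemma integral_w' {α c : ℝ} (hα : 0 < α) (hc : 0 < c) :
    ∫ z in {z : ℝ | c ≤ |z|}, |z| ^ (-(1+α)) = 2 * c ^ (-α) / α := by
  rw [set_eq', setIntegral_union (by rw [Set.disjoint_left]; intro a ha hb; simp at ha hb; linarith)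
    measurableSet_Ici (integrableOn_w_Iic' hα hc) (integrableOn_w_Ici' hα hc)]
  have h1 : ∫ z in Ici c, |z| ^ (-(1+α)) = c ^ (-α) / α := by
    rw [integral_Ici_eq_integral_Ioi]
    rw [show (∫ z in Ioi c, |z| ^ (-(1+α))) = ∫ z in Ioi c, z ^ (-(1+α)) from
      setIntegral_congr_fun measurableSet_Ioi (fun z hz => by rw [abs_of_pos (hc.trans hz)])]
    rw [integral_Ioi_rpow_of_lt (by linarith) hc]
    rw [show -(1+α) + 1 = -α by ring]
    field_simp
  have h2 : ∫ z in Iic (-c), |z| ^ (-(1+α)) = c ^ (-α) / α := by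
    rw [show (∫ z in Iic (-c), |z| ^ (-(1+α))) = ∫ z in Iic (-c), |(-z)| ^ (-(1+α)) from
      setIntegral_congr_fun measurableSet_Iic (fun z _ => by rw [abs_neg])]
    rw [integral_comp_neg_Iic (-c) (fun z => |z| ^ (-(1+α))), neg_neg,
      ← integral_Ici_eq_integral_Ioi, h1]
  rw [h1, h2]; ring

lemma taylor_sym' {f f' f'' : ℝ → ℝ} (hd1 : ∀ y, HasDerivAt f (f' y) y)
    (hd2 : ∀ y, HasDerivAt f' (f'' y) y) {x N K : ℝ}
    (hK : ∀ u, |u - x| ≤ N → |f'' u| ≤ K) {z : ℝ} (hz0 : 0 ≤ z) (hzN : z ≤ N) :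
    |f (x + z) + f (x - z) - 2 * f x| ≤ 2 * K * z ^ 2 := by
  set φ : ℝ → ℝ := fun t => f (x + t) + f (x - t) - 2 * f x with hφ
  have hφ' : ∀ t, HasDerivAt φ (f' (x + t) - f' (x - t)) t := by
    intro t
    have h₁ : HasDerivAt (fun t : ℝ => f (x + t)) (f' (x + t)) t := by
      simpa [Function.comp_def] using (hd1 (x + t)).comp t ((hasDerivAt_id t).const_add x)
    have h₂ : HasDerivAt (fun t : ℝ => f (x - t)) (-f' (x - t)) t := by
      simpa [Function.comp_def] using (hd1 (x - t)).comp t ((hasDerivAt_id t).neg.const_add x)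
    simpa [sub_eq_add_neg, hφ] using (h₁.add h₂).sub_const (2 * f x)
  have hbound : ∀ t ∈ Icc (0:ℝ) z, |f' (x + t) - f' (x - t)| ≤ 2 * K * z := by
    intro t ht
    have hmvt : ‖f' (x + t) - f' (x - t)‖ ≤ K * ‖(x + t) - (x - t)‖ := by
      apply Convex.norm_image_sub_le_of_norm_hasDerivWithin_le
        (f := f') (f' := f'') (s := Icc (x - N) (x + N)) (C := K)
        (fun u _ => (hd2 u).hasDerivWithinAt)
        (fun u hu => by
          apply hK; rw [abs_le]; constructor <;> [linarith [hu.1]; linarith [hu.2]])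
        (convex_Icc _ _)
      · constructor <;> [linarith [ht.1, ht.2]; linarith [ht.1, ht.2]]
      · constructor <;> [linarith [ht.1, ht.2]; linarith [ht.1, ht.2]]
    have hn : ‖(x + t) - (x - t)‖ = 2 * t := by
      rw [show (x + t) - (x - t) = 2 * t by ring, Real.norm_eq_abs,
        abs_of_nonneg (by linarith [ht.1])]
    rw [Real.norm_eq_abs] at hmvt
    rw [hn] at hmvt
    have hK0 : 0 ≤ K := le_trans (abs_nonneg _) (hK x (by simpa using hzN.trans' hz0))
    nlinarith [ht.1, ht.2]
  have hmvt2 : ‖φ z - φ 0‖ ≤ (2 * K * z) * ‖z - 0‖ := by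
    apply Convex.norm_image_sub_le_of_norm_hasDerivWithin_le
      (f := φ) (f' := fun t => f' (x + t) - f' (x - t)) (s := Icc (0:ℝ) z)
      (fun u _ => (hφ' u).hasDerivWithinAt)
      (fun u hu => by rw [Real.norm_eq_abs]; exact hbound u hu)
      (convex_Icc _ _) (by constructor <;> linarith) (by constructor <;> linarith)
  have hφ0 : φ 0 = 0 := by simp [hφ]; ring
  rw [hφ0, sub_zero, sub_zero, Real.norm_eq_abs, Real.norm_eq_abs,
    abs_of_nonneg hz0] at hmvt2
  calc |φ z| ≤ 2 * K * z * z := hmvt2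
  _ = 2 * K * z ^ 2 := by ring

lemma integrable_comp_add' {f : ℝ → ℝ} (hf : Integrable f) (x : ℝ) :
    Integrable (fun z => f (x + z)) := by
  have emb : MeasurableEmbedding (fun z : ℝ => x + z) :=
    (Homeomorph.addLeft x).isClosedEmbedding.measurableEmbedding
  have h2 := (emb.integrable_map_iff (g := f) (μ := volume)).mp
  rw [MeasureTheory.map_add_left_eq_self] at h2
  exact h2 hf

end helpers

section main

lemma main_est (α : ℝ) (hα : α ∈ Set.Ioc (0:ℝ) 1) (f f' f'' : ℝ → ℝ)
    (hf_nonneg : ∀ y, 0 ≤ f y) (hf_int : Integrable f)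
    (hd1 : ∀ y, HasDerivAt f (f' y) y) (hd2 : ∀ y, HasDerivAt f' (f'' y) y)
    (x N ε K : ℝ) (hε : 0 < ε) (hεN : ε ≤ N) (hN1 : 1 ≤ N)
    (hK : ∀ u, |u - x| ≤ N → |f'' u| ≤ K) :
    |∫ y in {y : ℝ | ε ≤ |y - x|}, (f y - f x) * |y - x| ^ (-(1+α))| ≤
      N ^ (-(1+α)) * (∫ y, f y) + (2/α) * f x + 2 * K * N ^ (2-α) := by
  obtain ⟨hα0, hα1⟩ := hα
  have hN0 : (0:ℝ) < N := by linarith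
  have hf_cont : Continuous f := by
    rw [continuous_iff_continuousAt]; exact fun y => (hd1 y).differentiableAt.continuousAt
  have hK0 : 0 ≤ K := le_trans (abs_nonneg _) (hK x (by simp [hN0.le]))
  set w : ℝ → ℝ := fun z => |z| ^ (-(1+α)) with hw
  have hw_meas : Measurable w := measurable_id.abs.pow_const _
  have hw_nonneg : ∀ z, 0 ≤ w z := fun z => rpow_nonneg (abs_nonneg z) _
  set g : ℝ → ℝ := fun z => (f (x + z) - f x) * w z with hg
  -- Step 1: translation
  have step1 : (∫ y in {y : ℝ | ε ≤ |y - x|}, (f y - f x) * |y - x| ^ (-(1+α)))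
      = ∫ z in {z : ℝ | ε ≤ |z|}, g z := by
    have emb : MeasurableEmbedding (fun z : ℝ => x + z) :=
      (Homeomorph.addLeft x).isClosedEmbedding.measurableEmbedding
    have hmap := emb.setIntegral_map (μ := volume)
      (fun y => (f y - f x) * |y - x| ^ (-(1+α))) {y : ℝ | ε ≤ |y - x|}
    rw [MeasureTheory.map_add_left_eq_self] at hmap
    rw [hmap]
    have hpre : ((fun z : ℝ => x + z) ⁻¹' {y : ℝ | ε ≤ |y - x|}) = {z : ℝ | ε ≤ |z|} := by
      ext z; simp [add_sub_cancel_left]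
    rw [hpre]
    refine setIntegral_congr_fun (by
      have : {z : ℝ | ε ≤ |z|} = (fun z : ℝ => |z|) ⁻¹' Ici ε := rfl
      rw [this]; exact (measurable_abs) measurableSet_Ici) (fun z _ => by
      simp [g, w, add_sub_cancel_left])
  rw [step1]
  -- integrability facts
  have hfx_int : Integrable (fun z => f (x + z)) := integrable_comp_add' hf_int x
  have hmeas_set : ∀ c : ℝ, MeasurableSet {z : ℝ | c ≤ |z|} :=
    fun c => (measurable_abs) measurableSet_Ici
  have hA : ∀ c : ℝ, 0 < c → IntegrableOn (fun z => f (x + z) * w z) {z : ℝ | c ≤ |z|} := by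
    intro c hc
    have h1 : IntegrableOn (fun z => f (x + z) * w z) {z : ℝ | c ≤ |z|} := by
      refine Integrable.mono' ((hfx_int.const_mul (c ^ (-(1+α)))).integrableOn)
        ((hfx_int.aestronglyMeasurable.mono_measure Measure.restrict_le_self).mul
          (hw_meas.aestronglyMeasurable.mono_measure Measure.restrict_le_self)) ?_
      filter_upwards [ae_restrict_mem (hmeas_set c)] with z hz
      rw [Real.norm_eq_abs, abs_mul, abs_of_nonneg (hf_nonneg _), abs_of_nonneg (hw_nonneg _)]
      rw [mul_comm (c ^ (-(1+α)))]
      apply mul_le_mul_of_nonneg_left _ (hf_nonneg _)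
      exact rpow_le_rpow_of_nonpos hc hz (by linarith)
    exact h1
  have hB : ∀ c : ℝ, 0 < c → IntegrableOn (fun z => f x * w z) {z : ℝ | c ≤ |z|} :=
    fun c hc => (integrableOn_w' hα0 hc).const_mul (f x)
  have hIg : ∀ c : ℝ, 0 < c → IntegrableOn g {z : ℝ | c ≤ |z|} := by
    intro c hc
    refine ((hA c hc).sub (hB c hc)).congr ?_
    filter_upwards [] with z
    show f (x + z) * w z - f x * w z = g z
    simp only [g]; ring
  -- region split
  set S₁ : Set ℝ := Icc (-N) (-ε) ∪ Icc ε N with hS₁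
  set S₂ : Set ℝ := {z : ℝ | N < |z|} with hS₂
  have hS₂meas : MeasurableSet S₂ := (measurable_abs) measurableSet_Ioi
  have hS₁sub : S₁ ⊆ {z : ℝ | ε ≤ |z|} := by
    rintro z (⟨h1, h2⟩ | ⟨h1, h2⟩) <;> simp only [mem_setOf_eq, le_abs] <;>
      [exact Or.inr (by linarith); exact Or.inl h1]
  have hS₂sub : S₂ ⊆ {z : ℝ | N ≤ |z|} := by
    intro z hz; simp only [hS₂, mem_setOf_eq] at hz ⊢; linarith
  have hS₂sub' : S₂ ⊆ {z : ℝ | ε ≤ |z|} := by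
    intro z hz; simp only [hS₂, mem_setOf_eq] at hz ⊢; linarith
  have hsplit : {z : ℝ | ε ≤ |z|} = S₁ ∪ S₂ := by
    ext z
    simp only [hS₁, hS₂, mem_setOf_eq, mem_union, mem_Icc]
    constructor
    · intro h
      rcases le_or_gt |z| N with h2 | h2
      · rcases le_total z 0 with h3 | h3
        · rw [abs_of_nonpos h3] at h h2; exact Or.inl (Or.inl ⟨by linarith, by linarith⟩)
        · rw [abs_of_nonneg h3] at h h2; exact Or.inl (Or.inr ⟨h, h2⟩)
      · exact Or.inr h2
    · rintro ((⟨h1, h2⟩ | ⟨h1, h2⟩) | h)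
      · rcases abs_cases z with ⟨he, _⟩ | ⟨he, _⟩ <;> linarith
      · rcases abs_cases z with ⟨he, _⟩ | ⟨he, _⟩ <;> linarith
      · linarith
  have hdisj : Disjoint S₁ S₂ := by
    rw [Set.disjoint_left]
    rintro z (⟨h1, h2⟩ | ⟨h1, h2⟩) hz <;> simp only [hS₂, mem_setOf_eq] at hz <;>
      rcases abs_cases z with ⟨he, _⟩ | ⟨he, _⟩ <;> linarith
  have hIgS₁ : IntegrableOn g S₁ := (hIg ε hε).mono_set hS₁sub
  have hIgS₂ : IntegrableOn g S₂ := (hIg ε hε).mono_set hS₂sub'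
  rw [hsplit, setIntegral_union hdisj hS₂meas hIgS₁ hIgS₂]
  -- near piece
  have hIcc : IntegrableOn g (Icc ε N) := hIgS₁.mono_set subset_union_right
  have hIccNeg : IntegrableOn g (Icc (-N) (-ε)) := hIgS₁.mono_set subset_union_left
  have hpre_neg : ((fun z : ℝ => -z) ⁻¹' Icc (-N) (-ε)) = Icc ε N := by
    ext z; simp only [mem_preimage, mem_Icc]; constructor <;> intro h <;>
      exact ⟨by linarith [h.1, h.2], by linarith [h.1, h.2]⟩
  have hrefl : ∫ z in Icc (-N) (-ε), g z = ∫ z in Icc ε N, g (-z) := by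
    have hmap := neg_emb'.setIntegral_map (μ := volume) g (Icc (-N) (-ε))
    rw [Measure.map_neg_eq_self] at hmap
    rw [hmap, hpre_neg]
  have hIccNeg' : IntegrableOn (fun z => g (-z)) (Icc ε N) := by
    rw [← Measure.map_neg_eq_self (volume : Measure ℝ)] at hIccNeg
    rw [neg_emb'.integrableOn_map_iff, hpre_neg] at hIccNeg
    exact hIccNeg
  have hnear : |∫ z in S₁, g z| ≤ 2 * K * N ^ (2-α) := by
    rw [hS₁, setIntegral_union (by
        rw [Set.disjoint_left]; rintro z ⟨h1, h2⟩ ⟨h3, h4⟩; linarith)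
      measurableSet_Icc hIccNeg hIcc, hrefl, ← integral_add hIccNeg' hIcc]
    have hptw : ∀ z ∈ Icc ε N, |g (-z) + g z| ≤ 2 * K * z ^ (1-α) := by
      intro z hz
      have hz0 : 0 < z := lt_of_lt_of_le hε hz.1
      have hgg : g (-z) + g z = (f (x + z) + f (x - z) - 2 * f x) * w z := by
        simp only [g, w, abs_neg]
        rw [show x + -z = x - z by ring]
        ring
      rw [hgg, abs_mul, abs_of_nonneg (hw_nonneg z)]
      have ht := taylor_sym' hd1 hd2 hK hz0.le hz.2
      have hwz : w z = z ^ (-(1+α)) := by rw [hw]; simp only []; rw [abs_of_pos hz0]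
      calc |f (x + z) + f (x - z) - 2 * f x| * w z ≤ (2 * K * z ^ 2) * w z :=
            mul_le_mul_of_nonneg_right ht (hw_nonneg z)
        _ = 2 * K * (z ^ (2:ℕ) * z ^ (-(1+α))) := by rw [hwz]; ring
        _ = 2 * K * z ^ (1-α) := by
            rw [← Real.rpow_natCast z 2, ← Real.rpow_add hz0,
              show ((2:ℕ):ℝ) + -(1+α) = 1-α by push_cast; ring]
    have hint_rhs : IntegrableOn (fun z => 2 * K * z ^ (1-α)) (Icc ε N) := by
      apply ContinuousOn.integrableOn_Icc
      exact continuousOn_const.mul (continuousOn_id.rpow_const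
        (fun z hz => Or.inl (ne_of_gt (lt_of_lt_of_le hε hz.1))))
    calc |∫ z in Icc ε N, (g (-z) + g z)| ≤ ∫ z in Icc ε N, |g (-z) + g z| := by
          simpa [Real.norm_eq_abs] using norm_integral_le_integral_norm
            (μ := volume.restrict (Icc ε N)) (fun z => g (-z) + g z)
      _ ≤ ∫ z in Icc ε N, 2 * K * z ^ (1-α) :=
          setIntegral_mono_on ((hIccNeg'.add hIcc).abs) hint_rhs measurableSet_Icc hptw
      _ = 2 * K * ∫ z in Icc ε N, z ^ (1-α) := by rw [← integral_const_mul]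
      _ ≤ 2 * K * N ^ (2-α) := by
          apply mul_le_mul_of_nonneg_left _ (by linarith)
          rw [integral_Icc_eq_integral_Ioc, ← intervalIntegral.integral_of_le hεN,
            integral_rpow (Or.inl (by linarith : (-1:ℝ) < 1 - α)),
            show (1:ℝ) - α + 1 = 2 - α by ring]
          rw [div_le_iff₀ (by linarith : (0:ℝ) < 2 - α)]
          nlinarith [Real.rpow_nonneg (le_of_lt (lt_of_lt_of_le hε hεN)) (2-α),
            Real.rpow_nonneg hε.le (2-α)]
  -- far piece
  have hAS₂ : IntegrableOn (fun z => f (x + z) * w z) S₂ := (hA N hN0).mono_set hS₂sub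
  have hBS₂ : IntegrableOn (fun z => f x * w z) S₂ := (hB N hN0).mono_set hS₂sub
  have hfar : |∫ z in S₂, g z| ≤ N ^ (-(1+α)) * (∫ y, f y) + (2/α) * f x := by
    have h1 : |∫ z in S₂, g z| ≤ ∫ z in S₂, (f (x + z) * w z + f x * w z) := by
      refine le_trans (by
          simpa [Real.norm_eq_abs] using norm_integral_le_integral_norm
            (μ := volume.restrict S₂) g) ?_
      refine setIntegral_mono_on hIgS₂.abs (hAS₂.add hBS₂) hS₂meas (fun z hz => ?_)
      simp only [g, abs_mul, abs_of_nonneg (hw_nonneg z)]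
      have : |f (x + z) - f x| ≤ f (x + z) + f x := by
        rw [abs_le]; constructor <;> nlinarith [hf_nonneg (x + z), hf_nonneg x]
      nlinarith [hw_nonneg z]
    rw [integral_add hAS₂ hBS₂] at h1
    have h2 : ∫ z in S₂, f (x + z) * w z ≤ N ^ (-(1+α)) * (∫ y, f y) := by
      have h2a : ∫ z in S₂, f (x + z) * w z ≤ ∫ z in S₂, N ^ (-(1+α)) * f (x + z) := by
        refine setIntegral_mono_on hAS₂ (((hfx_int.const_mul _)).integrableOn) hS₂meas
          (fun z hz => ?_)
        rw [mul_comm (N ^ (-(1+α)))]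
        refine mul_le_mul_of_nonneg_left ?_ (hf_nonneg _)
        exact rpow_le_rpow_of_nonpos hN0 (le_of_lt hz) (by linarith)
      refine h2a.trans ?_
      rw [integral_const_mul]
      refine mul_le_mul_of_nonneg_left ?_ (rpow_nonneg hN0.le _)
      refine (setIntegral_le_integral hfx_int
        (Filter.Eventually.of_forall (fun z => hf_nonneg _))).trans ?_
      rw [MeasureTheory.integral_add_left_eq_self]
    have h3 : ∫ z in S₂, f x * w z ≤ (2/α) * f x := by
      rw [integral_const_mul]
      have h3a : ∫ z in S₂, w z ≤ ∫ z in {z : ℝ | N ≤ |z|}, w z :=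
        setIntegral_mono_set (integrableOn_w' hα0 hN0)
          (Filter.Eventually.of_forall (fun z => hw_nonneg z)) hS₂sub.eventuallyLE
      rw [integral_w' hα0 hN0] at h3a
      have hNα : N ^ (-α) ≤ 1 := Real.rpow_le_one_of_one_le_of_nonpos hN1 (by linarith)
      have h3b : ∫ z in S₂, w z ≤ 2 / α := by
        refine h3a.trans ?_
        rw [div_le_div_iff₀ hα0 hα0]
        nlinarith
      calc f x * ∫ z in S₂, w z ≤ f x * (2/α) :=
            mul_le_mul_of_nonneg_left h3b (hf_nonneg x)
        _ = (2/α) * f x := by ring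
    linarith
  calc |(∫ z in S₁, g z) + ∫ z in S₂, g z| ≤ |∫ z in S₁, g z| + |∫ z in S₂, g z| :=
        abs_add_le _ _
    _ ≤ N ^ (-(1+α)) * (∫ y, f y) + (2/α) * f x + 2 * K * N ^ (2-α) := by linarith

end main
lemma hasDerivAt_f (V : ℝ → ℝ) (hV : ContDiff ℝ 2 V) (y : ℝ) :
    HasDerivAt (fun y => Real.exp (-(V y))) (Real.exp (-(V y)) * (-(deriv V y))) y := by
  have hVd : HasDerivAt V (deriv V y) y :=
    ((hV.differentiable (by norm_num)) y).hasDerivAt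
  exact (hVd.neg).exp

lemma deriv_f (V : ℝ → ℝ) (hV : ContDiff ℝ 2 V) :
    deriv (fun y => Real.exp (-(V y))) = fun y => Real.exp (-(V y)) * (-(deriv V y)) :=
  funext fun y => (hasDerivAt_f V hV y).deriv

lemma contdiff_derivV (V : ℝ → ℝ) (hV : ContDiff ℝ 2 V) : ContDiff ℝ 1 (deriv V) := by
  have := (contDiff_succ_iff_deriv (n := 1)).mp (by norm_num at hV ⊢; exact hV)
  exact this.2.2

lemma hasDerivAt_f' (V : ℝ → ℝ) (hV : ContDiff ℝ 2 V) (y : ℝ) :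
    HasDerivAt (fun y => Real.exp (-(V y)) * (-(deriv V y)))
      (((deriv V y) ^ 2 - deriv (deriv V) y) * Real.exp (-(V y))) y := by
  have hVd : HasDerivAt (deriv V) (deriv (deriv V) y) y :=
    (((contdiff_derivV V hV).differentiable (by norm_num)) y).hasDerivAt
  have h : HasDerivAt (fun y => Real.exp (-(V y)) * (-(deriv V y)))
      ((Real.exp (-(V y)) * (-(deriv V y))) * (-(deriv V y))
        + Real.exp (-(V y)) * (-(deriv (deriv V) y))) y :=
    (hasDerivAt_f V hV y).mul hVd.neg
  convert h using 1; ring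

lemma deriv2_f (V : ℝ → ℝ) (hV : ContDiff ℝ 2 V) (y : ℝ) :
    deriv (deriv (fun y => Real.exp (-(V y)))) y
      = ((deriv V y) ^ 2 - deriv (deriv V) y) * Real.exp (-(V y)) := by
  rw [deriv_f V hV]
  exact (hasDerivAt_f' V hV y).deriv

lemma rpow_inv_helper {s t p : ℝ} (hs : 0 < s) (ht : 0 < t) (hst : t ≤ 4 * s)
    (hp0 : 0 ≤ p) (hp2 : p ≤ 2) : s ^ (-p) ≤ 16 * t ^ (-p) := by
  have hs' : 0 < s ^ p := Real.rpow_pos_of_pos hs p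
  have ht' : 0 < t ^ p := Real.rpow_pos_of_pos ht p
  have h4 : t ^ p ≤ 16 * s ^ p := by
    calc t ^ p ≤ (4 * s) ^ p := Real.rpow_le_rpow ht.le hst hp0
      _ = 4 ^ p * s ^ p := Real.mul_rpow (by norm_num) hs.le
      _ ≤ 16 * s ^ p := by
          have h1 : (4:ℝ) ^ p ≤ 4 ^ (2:ℝ) :=
            Real.rpow_le_rpow_of_exponent_le (by norm_num) hp2
          have h2 : (4:ℝ) ^ (2:ℝ) = 16 := by
            rw [show (2:ℝ) = ((2:ℕ):ℝ) by norm_num, Real.rpow_natCast]; norm_num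
          nlinarith
  rw [Real.rpow_neg hs.le, Real.rpow_neg ht.le]
  rw [← div_eq_mul_inv, le_div_iff₀ ht', inv_mul_eq_div, div_le_iff₀ hs']
  linarith

theorem stmt_11 (α : ℝ) (hα : α ∈ Set.Ioc (0 : ℝ) 1)
    (V : ℝ → ℝ) (hV : ContDiff ℝ 2 V)
    (hL1 : Integrable (fun x => Real.exp (-(V x))))
    (hCb2 : ∃ M : ℝ, ∀ x : ℝ, Real.exp (-(V x)) ≤ M ∧
      |deriv (fun y => Real.exp (-(V y))) x| ≤ M ∧
      |deriv (deriv (fun y => Real.exp (-(V y)))) x| ≤ M)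
    (hlim : ∃ M R : ℝ, ∀ x : ℝ, R ≤ |x| →
      |x| ^ 3 * Real.exp (-(V x)) * |(deriv V x) ^ 2 - deriv (deriv V) x| ≤ M) :
    ∃ c : ℝ, 0 < c ∧ ∀ x : ℝ, ∀ ε ∈ Set.Ioc (0 : ℝ) 1,
      |∫ y in {y : ℝ | ε ≤ |y - x|},
          (Real.exp (-(V y)) - Real.exp (-(V x))) * |y - x| ^ (-(1 + α))| ≤
        c * ((1 + |x|) ^ (-(1 + α)) + Real.exp (-(V x))) := by
  obtain ⟨hα0, hα1⟩ := hα
  obtain ⟨M, hM⟩ := hCb2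
  obtain ⟨M₁, R, hMR⟩ := hlim
  set f : ℝ → ℝ := fun y => Real.exp (-(V y)) with hf
  set f' : ℝ → ℝ := fun y => Real.exp (-(V y)) * (-(deriv V y)) with hf'
  set f'' : ℝ → ℝ := fun y => ((deriv V y) ^ 2 - deriv (deriv V) y) * Real.exp (-(V y)) with hf''
  have hd1 : ∀ y, HasDerivAt f (f' y) y := hasDerivAt_f V hV
  have hd2 : ∀ y, HasDerivAt f' (f'' y) y := hasDerivAt_f' V hV
  have hf_nonneg : ∀ y, 0 ≤ f y := fun y => (Real.exp_pos _).le
  have hM2 : ∀ y, |f'' y| ≤ M := by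
    intro y
    have := (hM y).2.2
    rwa [deriv2_f V hV y] at this
  have hM0 : 0 < M := lt_of_lt_of_le (Real.exp_pos _) (hM 0).1
  set M₁' : ℝ := max M₁ 0 with hM₁'
  set R' : ℝ := max R 1 with hR'
  have hM₁0 : 0 ≤ M₁' := le_max_right _ _
  have hR'1 : 1 ≤ R' := le_max_right _ _
  have htail : ∀ u : ℝ, R' ≤ |u| → |f'' u| ≤ M₁' / |u| ^ 3 := by
    intro u hu
    have hu1 : 1 ≤ |u| := le_trans hR'1 hu
    have h := hMR u (le_trans (le_max_left _ _) hu)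
    have habs : |f'' u| = Real.exp (-(V u)) * |(deriv V u) ^ 2 - deriv (deriv V) u| := by
      rw [hf'']; rw [abs_mul, abs_of_pos (Real.exp_pos _)]; ring
    rw [le_div_iff₀ (by positivity : (0:ℝ) < |u| ^ 3), habs]
    calc Real.exp (-(V u)) * |(deriv V u) ^ 2 - deriv (deriv V) u| * |u| ^ 3
        = |u| ^ 3 * Real.exp (-(V u)) * |(deriv V u) ^ 2 - deriv (deriv V) u| := by ring
      _ ≤ M₁ := h
      _ ≤ M₁' := le_max_left _ _
  
  have hIf0 : 0 ≤ ∫ y, f y := integral_nonneg hf_nonneg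
  set If : ℝ := ∫ y, f y with hIf
  set A : ℝ := (17 * If + 2 * M + 256 * M₁' + 1) * (5 + 2 * R') ^ 2 with hA
  have hA0 : 0 ≤ A := by
    apply mul_nonneg (by linarith) (by positivity)
  have hAge : (If + 2 * M) * (5 + 2 * R') ^ 2 ≤ A ∧ 16 * If + 256 * M₁' ≤ A := by
    constructor
    · apply mul_le_mul_of_nonneg_right (by linarith) (by positivity)
    · have h1 : (1:ℝ) ≤ (5 + 2 * R') ^ 2 := by nlinarith
      nlinarith
  refine ⟨A + 2 / α, by
    have h2α : (0:ℝ) < 2 / α := by positivity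
    linarith, ?_⟩
  intro x ε hεIoc
  obtain ⟨hε0, hε1⟩ := hεIoc
  set a : ℝ := |x| with ha
  have ha0 : (0:ℝ) ≤ a := abs_nonneg x
  have hb : (0:ℝ) < 1 + a := by linarith
  set T1 : ℝ := (1 + a) ^ (-(1 + α)) with hT1
  have hT1pos : 0 < T1 := Real.rpow_pos_of_pos hb _
  have hT2 : 0 ≤ f x := hf_nonneg x
  rcases le_or_gt a (2 * R' + 4) with hcase | hcase
  · -- small |x|
    have hest := main_est α ⟨hα0, hα1⟩ f f' f'' hf_nonneg hL1 hd1 hd2 x 1 ε M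
      hε0 hε1 le_rfl (fun u _ => hM2 u)
    rw [Real.one_rpow, Real.one_rpow, one_mul, mul_one] at hest
    have key : 1 ≤ (5 + 2 * R') ^ 2 * T1 := by
      have h1 : (1 + a) ^ ((1:ℝ) + α) ≤ (5 + 2 * R') ^ 2 := by
        calc (1 + a) ^ ((1:ℝ) + α) ≤ (5 + 2 * R') ^ ((1:ℝ) + α) :=
              Real.rpow_le_rpow hb.le (by linarith) (by linarith)
          _ ≤ (5 + 2 * R') ^ ((2:ℝ)) :=
              Real.rpow_le_rpow_of_exponent_le (by linarith) (by linarith)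
          _ = (5 + 2 * R') ^ (2:ℕ) := by
              rw [← Real.rpow_natCast (5 + 2 * R') 2]; norm_num
      rw [hT1, show -(1 + α) = -((1:ℝ) + α) by ring, Real.rpow_neg hb.le,
        ← div_eq_mul_inv, le_div_iff₀ (Real.rpow_pos_of_pos hb _), one_mul]
      exact h1
    have h2 : If + 2 * M ≤ A * T1 := by
      calc If + 2 * M ≤ (If + 2 * M) * ((5 + 2 * R') ^ 2 * T1) :=
            le_mul_of_one_le_right (by linarith) key
        _ = ((If + 2 * M) * (5 + 2 * R') ^ 2) * T1 := by ring
        _ ≤ A * T1 := mul_le_mul_of_nonneg_right hAge.1 hT1pos.le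
    rw [← hIf] at hest
    refine hest.trans ?_
    have h3 : 0 ≤ A * f x := mul_nonneg hA0 hT2
    have h4 : 0 ≤ (2 / α) * T1 := by positivity
    have h8 : (A + 2 / α) * (T1 + f x) = A * T1 + A * f x + 2 / α * T1 + 2 / α * f x := by
      ring
    rw [h8]
    linarith
  · -- large |x|
    have ha6 : 6 < a := by linarith
    have hN1 : (1:ℝ) ≤ a / 2 := by linarith
    have hεN : ε ≤ a / 2 := by linarith
    have hK : ∀ u : ℝ, |u - x| ≤ a / 2 → |f'' u| ≤ 8 * M₁' / a ^ 3 := by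
      intro u hu
      have h1 : a / 2 ≤ |u| := by
        have h := abs_sub_abs_le_abs_sub x u
        rw [abs_sub_comm] at hu
        linarith
      have h2 : R' ≤ |u| := by linarith
      refine (htail u h2).trans ?_
      have hcube : (a / 2) ^ 3 ≤ |u| ^ 3 := pow_le_pow_left₀ (by linarith) h1 3
      have hu3 : (0:ℝ) < |u| ^ 3 := pow_pos (by linarith) 3
      have haimpl : (0:ℝ) < (a / 2) ^ 3 := pow_pos (by linarith) 3
      calc M₁' / |u| ^ 3 ≤ M₁' / (a / 2) ^ 3 := by
            rw [div_le_div_iff₀ hu3 haimpl]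
            exact mul_le_mul_of_nonneg_left hcube hM₁0
        _ = 8 * M₁' / a ^ 3 := by
            rw [div_pow, div_div_eq_mul_div]
            rw [show (2:ℝ) ^ 3 = 8 by norm_num]
            ring
    have hest := main_est α ⟨hα0, hα1⟩ f f' f'' hf_nonneg hL1 hd1 hd2 x (a / 2) ε
      (8 * M₁' / a ^ 3) hε0 hεN hN1 hK
    have hAcl : (a / 2) ^ (-(1 + α)) ≤ 16 * T1 := by
      have := rpow_inv_helper (s := a / 2) (t := 1 + a) (p := 1 + α)
        (by linarith) hb (by linarith) (by linarith) (by linarith)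
      rw [hT1]; rw [show -(1 + α) = -((1:ℝ) + α) by ring]
      exact this
    have hstep3 : a ^ (-(1 + α)) ≤ 16 * T1 := by
      have := rpow_inv_helper (s := a) (t := 1 + a) (p := 1 + α)
        (by linarith) hb (by linarith) (by linarith) (by linarith)
      rw [hT1]; rw [show -(1 + α) = -((1:ℝ) + α) by ring]
      exact this
    have hBstep : (a / 2) ^ ((2:ℝ) - α) ≤ a ^ ((2:ℝ) - α) :=
      Real.rpow_le_rpow (by linarith) (by linarith) (by linarith)
    have ha3eq : a ^ ((2:ℝ) - α) / a ^ 3 = a ^ (-(1 + α)) := by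
      rw [← Real.rpow_natCast a 3, ← Real.rpow_sub (by linarith : (0:ℝ) < a)]
      congr 1
      push_cast
      ring
    have hB : 2 * (8 * M₁' / a ^ 3) * (a / 2) ^ ((2:ℝ) - α) ≤ 256 * M₁' * T1 := by
      have hq0 : (0:ℝ) ≤ 16 * M₁' / a ^ 3 := by positivity
      calc 2 * (8 * M₁' / a ^ 3) * (a / 2) ^ ((2:ℝ) - α)
          = (16 * M₁' / a ^ 3) * (a / 2) ^ ((2:ℝ) - α) := by ring
        _ ≤ (16 * M₁' / a ^ 3) * a ^ ((2:ℝ) - α) :=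
            mul_le_mul_of_nonneg_left hBstep hq0
        _ = 16 * M₁' * (a ^ ((2:ℝ) - α) / a ^ 3) := by ring
        _ = 16 * M₁' * a ^ (-(1 + α)) := by rw [ha3eq]
        _ ≤ 16 * M₁' * (16 * T1) :=
            mul_le_mul_of_nonneg_left hstep3 (by positivity)
        _ = 256 * M₁' * T1 := by ring
    rw [← hIf] at hest
    refine hest.trans ?_
    have h5 : (a / 2) ^ (-(1 + α)) * If ≤ 16 * T1 * If :=
      mul_le_mul_of_nonneg_right hAcl hIf0
    have h6 : (16 * If + 256 * M₁') * T1 ≤ A * T1 :=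
      mul_le_mul_of_nonneg_right hAge.2 hT1pos.le
    have h3 : 0 ≤ A * f x := mul_nonneg hA0 hT2
    have h4 : 0 ≤ (2 / α) * T1 := by positivity
    have h7 : 16 * T1 * If + 256 * M₁' * T1 ≤ A * T1 := by nlinarith [h6]
    have h8 : (A + 2 / α) * (T1 + f x) = A * T1 + A * f x + 2 / α * T1 + 2 / α * f x := by
      ring
    rw [h8]
    linarith
end

section
/- Let α ∈ (0,1] and let V ∈ C²(ℝ) be a symmetric function (V(x) = V(−x) for all x ∈ ℝ) such that e^{−V} ∈ L¹(ℝ; dx) ∩ C_b²(ℝ), and suppose that limsup_{|x|→∞} |x|³ e^{−V(x)} |V'(x)² − V''(x)| < ∞. Then: (i) ∫₀^∞ (−Δ)^{α/2} e^{−V(u)} du = 0; (ii) b(0) = 0 and b(−x) = −b(x) for all x ∈ ℝ; (iii) b(x) = e^{V(x)} ∫_x^∞ (−Δ)^{α/2} e^{−V(z)} dz for all x ≥ 0 and b(x) = −e^{V(x)} ∫_{−x}^∞ (−Δ)^{α/2} e^{−V(z)} dz for all x < 0; (iv) b ∈ C¹(ℝ). -/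
open MeasureTheory Real Filter

section Aux

open Set

private noncomputable def phiF (g : ℝ → ℝ) (u z : ℝ) : ℝ :=
  g (u + z) - g u - deriv g u * z * (if |z| ≤ 1 then 1 else 0)

private noncomputable def kerF (α : ℝ) (g : ℝ → ℝ) (u z : ℝ) : ℝ :=
  phiF g u z * |z| ^ (-(1 + α))

private lemma contDiff_deriv_one {g : ℝ → ℝ} (hg : ContDiff ℝ 2 g) :
    ContDiff ℝ 1 (deriv g) := by
  have := (contDiff_succ_iff_deriv (n := 1) (f := g)).mp (by exact_mod_cast hg)
  exact this.2.2

private lemma taylor_bound {g : ℝ → ℝ} (hg : ContDiff ℝ 2 g) (u z B : ℝ)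
    (hB : ∀ x ∈ Set.Icc (u - |z|) (u + |z|), |deriv (deriv g) x| ≤ B) :
    |g (u + z) - g u - deriv g u * z| ≤ B * z ^ 2 := by
  have hgd : Differentiable ℝ g := hg.differentiable two_ne_zero
  have hgd' : Differentiable ℝ (deriv g) := (contDiff_deriv_one hg).differentiable one_ne_zero
  have hg'c : Continuous (deriv g) := (contDiff_deriv_one hg).continuous
  have hBnn : 0 ≤ B := le_trans (abs_nonneg _)
    (hB u ⟨by linarith [abs_nonneg z], by linarith [abs_nonneg z]⟩)
  -- Lipschitz-type bound on deriv g over the interval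
  have key : ∀ t ∈ Set.uIcc 0 z, |deriv g (u + t) - deriv g u| ≤ B * |z| := by
    intro t ht
    have htz : |t| ≤ |z| := by
      rcases Set.mem_uIcc.mp ht with h | h
      · rw [abs_of_nonneg h.1]; exact le_trans h.2 (le_abs_self z)
      · rw [abs_of_nonpos h.2]; exact le_trans (neg_le_neg h.1) (neg_le_abs z)
    have h1 : u + t ∈ Set.Icc (u - |z|) (u + |z|) := by
      constructor <;> [linarith [neg_le_of_abs_le htz]; linarith [le_of_abs_le htz]]
    have h2 : u ∈ Set.Icc (u - |z|) (u + |z|) := by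
      constructor <;> linarith [abs_nonneg z]
    have := Convex.norm_image_sub_le_of_norm_deriv_le (f := deriv g)
      (fun x _ => hgd' x) (fun x hx => hB x hx)
      (convex_Icc _ _) h2 h1
    calc |deriv g (u + t) - deriv g u| ≤ B * ‖u + t - u‖ := this
    _ = B * |t| := by norm_num
    _ ≤ B * |z| := by exact mul_le_mul_of_nonneg_left htz hBnn
  -- FTC
  have hftc : g (u + z) - g u = ∫ t in (0:ℝ)..z, deriv g (u + t) := by
    rw [intervalIntegral.integral_eq_sub_of_hasDerivAt (f := fun t => g (u + t)) ?_ ?_]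
    · simp
    · intro t ht
      exact ((hgd (u + t)).hasDerivAt.comp t ((hasDerivAt_id t).const_add u)).congr_deriv (mul_one _)
    · exact (hg'c.comp (continuous_const.add continuous_id)).intervalIntegrable _ _
  have hconst : deriv g u * z = ∫ t in (0:ℝ)..z, deriv g u := by
    simp [mul_comm]
  have hsub : g (u + z) - g u - deriv g u * z
      = ∫ t in (0:ℝ)..z, (deriv g (u + t) - deriv g u) := by
    rw [hftc, hconst, ← intervalIntegral.integral_sub]
    · exact (hg'c.comp (continuous_const.add continuous_id)).intervalIntegrable _ _
    · exact intervalIntegrable_const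
  rw [hsub]
  have := intervalIntegral.norm_integral_le_of_norm_le_const
    (C := B * |z|) (f := fun t => deriv g (u + t) - deriv g u) (a := 0) (b := z) ?_
  · calc ‖∫ t in (0:ℝ)..z, (deriv g (u + t) - deriv g u)‖ ≤ B * |z| * |z - 0| := this
    _ = B * z ^ 2 := by rw [sub_zero, mul_assoc, ← abs_mul, abs_mul_self]; ring
  · intro t ht
    exact key t (Set.uIoc_subset_uIcc ht)


private lemma ker_measurable {α : ℝ} {g : ℝ → ℝ} (hg : Continuous g)
    (hg' : Continuous (deriv g)) :
    Measurable (fun p : ℝ × ℝ => kerF α g p.1 p.2) := by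
  unfold kerF phiF
  have h1 : Measurable (fun p : ℝ × ℝ => g (p.1 + p.2)) :=
    (hg.comp (continuous_fst.add continuous_snd)).measurable
  have h2 : Measurable (fun p : ℝ × ℝ => g p.1) := (hg.comp continuous_fst).measurable
  have h3 : Measurable (fun p : ℝ × ℝ => deriv g p.1 * p.2) :=
    ((hg'.comp continuous_fst).measurable.mul measurable_snd)
  have h4 : Measurable (fun p : ℝ × ℝ => (if |p.2| ≤ 1 then (1:ℝ) else 0)) := by
    apply Measurable.ite _ measurable_const measurable_const
    exact measurableSet_le (measurable_snd.abs) measurable_const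
  have h5 : Measurable (fun p : ℝ × ℝ => |p.2| ^ (-(1 + α))) := by measurability
  exact (((h1.sub h2).sub (h3.mul h4)).mul h5)


private lemma hfun_int {α : ℝ} (hα0 : 0 < α) (hα1 : α ≤ 1) (A B : ℝ) :
    Integrable (fun z : ℝ => (if |z| ≤ 1 then A * z ^ 2 else B) * |z| ^ (-(1 + α))) := by
  set f : ℝ → ℝ := fun z => (if |z| ≤ 1 then A * z ^ 2 else B) * |z| ^ (-(1 + α)) with hf
  have hfmeas : Measurable f := by
    apply Measurable.mul
    · exact Measurable.ite (measurableSet_le measurable_abs measurable_const)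
        (measurable_const.mul (measurable_id.pow_const 2)) measurable_const
    · measurability
  have hIoc : IntegrableOn f (Ioc 0 1) := by
    have h1 : IntegrableOn (fun z : ℝ => A * z ^ (1 - α)) (Ioc 0 1) := by
      have := intervalIntegral.intervalIntegrable_rpow' (a := 0) (b := 1)
        (r := 1 - α) (by linarith)
      exact ((intervalIntegrable_iff_integrableOn_Ioc_of_le (by norm_num)).mp this).const_mul A
    apply h1.congr_fun ?_ measurableSet_Ioc
    intro z hz
    have hz0 : 0 < z := hz.1
    have hz1 : |z| ≤ 1 := by rw [abs_of_pos hz0]; exact hz.2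
    show A * z ^ (1 - α) = (if |z| ≤ 1 then A * z ^ 2 else B) * |z| ^ (-(1 + α))
    rw [if_pos hz1, abs_of_pos hz0, mul_assoc, ← Real.rpow_natCast z 2,
      ← Real.rpow_add hz0, show ((2:ℕ):ℝ) + -(1+α) = 1 - α by push_cast; ring]
  have hIoi : IntegrableOn f (Ioi 1) := by
    have h1 : IntegrableOn (fun z : ℝ => B * z ^ (-(1 + α))) (Ioi 1) :=
      (integrableOn_Ioi_rpow_of_lt (by linarith) one_pos).const_mul B
    apply h1.congr_fun ?_ measurableSet_Ioi
    intro z hz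
    have hz1 : ¬ |z| ≤ 1 := by rw [abs_of_pos (lt_trans one_pos hz)]; exact not_le.mpr hz
    simp [hf, hz1, abs_of_pos (lt_trans one_pos (mem_Ioi.mp hz)), not_le.mpr (mem_Ioi.mp hz)]
  have hIoi0 : IntegrableOn f (Ioi 0) := by
    have := hIoc.union hIoi
    rwa [Ioc_union_Ioi_eq_Ioi (by norm_num : (0:ℝ) ≤ 1)] at this
  have heven : ∀ z : ℝ, f (-z) = f z := by
    intro z; simp [hf, abs_neg]
  have hIio0 : IntegrableOn f (Iio 0) := by
    have m : MeasurableEmbedding (fun x : ℝ => -x) :=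
      (Homeomorph.neg ℝ).isClosedEmbedding.measurableEmbedding
    rw [← Measure.map_neg_eq_self (volume : Measure ℝ), m.integrableOn_map_iff]
    have h1 : (f ∘ fun x : ℝ => -x) = f := funext fun z => heven z
    have h2 : ((fun x : ℝ => -x) ⁻¹' (Iio 0)) = Ioi 0 := by ext x; simp
    rw [h1, h2]; exact hIoi0
  have : IntegrableOn f (Iic 0) := Iff.mpr integrableOn_Iic_iff_integrableOn_Iio hIio0
  have huniv : IntegrableOn f Set.univ := by
    rw [← Set.Iic_union_Ioi (a := (0:ℝ))]
    exact this.union hIoi0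
  exact integrableOn_univ.mp huniv


section ctx
variable {α : ℝ} (hα0 : 0 < α) (hα1 : α ≤ 1) {g : ℝ → ℝ} (hg : ContDiff ℝ 2 g)
  (hgpos : ∀ x, 0 < g x) (hgint : Integrable g)
  {C : ℝ} (hdec : ∀ u x : ℝ, |x - u| ≤ 1 → |deriv (deriv g) x| ≤ C * (1 + u ^ 2)⁻¹)

set_option linter.unusedSectionVars false



include hg hdec in
private lemma phiF_small (u z : ℝ) (hz : |z| ≤ 1) :
    |phiF g u z| ≤ C * (1 + u ^ 2)⁻¹ * z ^ 2 := by
  have h := taylor_bound hg u z (C * (1 + u ^ 2)⁻¹) ?_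
  · simpa [phiF, hz] using h
  · intro x hx
    apply hdec u x
    have h1 : |x - u| ≤ |z| := by
      rw [abs_le]; constructor <;> [linarith [hx.1]; linarith [hx.2]]
    exact le_trans h1 hz

include hg hgpos hgint hdec in
private lemma phi_int (z : ℝ) : Integrable (fun u => phiF g u z) := by
  have hgc : Continuous g := hg.continuous
  have hg'c : Continuous (deriv g) := (contDiff_deriv_one hg).continuous
  by_cases hz : |z| ≤ 1
  · apply Integrable.mono' ((integrable_inv_one_add_sq).const_mul (C * z ^ 2))
    · exact (((hgc.comp (continuous_id.add continuous_const)).sub hgc).sub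
        ((hg'c.mul continuous_const).mul continuous_const)).aestronglyMeasurable
    · refine Filter.Eventually.of_forall fun u => ?_
      have := phiF_small hg hdec u z hz
      rw [Real.norm_eq_abs]
      calc |phiF g u z| ≤ C * (1 + u ^ 2)⁻¹ * z ^ 2 := this
      _ = C * z ^ 2 * (1 + u ^ 2)⁻¹ := by ring
  · have he : (fun u => phiF g u z) = fun u => g (u + z) - g u := by
      funext u; simp [phiF, hz]
    rw [he]
    exact (hgint.comp_add_right z).sub hgint

include hg hgpos hgint hdec in
private lemma ker_sec_int (z : ℝ) : Integrable (fun u => kerF α g u z) :=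
  (phi_int hg hgpos hgint hdec z).mul_const _

include hα0 hα1 hg hgpos hgint hdec in
private lemma ker_prod_int :
    Integrable (fun p : ℝ × ℝ => kerF α g p.1 p.2) ((volume : Measure ℝ).prod volume) := by
  have hgc : Continuous g := hg.continuous
  have hg'c : Continuous (deriv g) := (contDiff_deriv_one hg).continuous
  have hmeas := ker_measurable (α := α) hgc hg'c
  rw [MeasureTheory.integrable_prod_iff' hmeas.aestronglyMeasurable]
  constructor
  · exact Filter.Eventually.of_forall fun z => ker_sec_int hg hgpos hgint hdec z
  · set ID : ℝ := ∫ u : ℝ, (1 + u ^ 2)⁻¹ with hID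
    set IG : ℝ := ∫ u : ℝ, g u with hIG
    apply Integrable.mono' (hfun_int hα0 hα1 (C * ID) (2 * IG))
    · exact (StronglyMeasurable.integral_prod_left
        (f := fun u z => ‖kerF α g u z‖) (hmeas.norm).stronglyMeasurable).aestronglyMeasurable
    · refine Filter.Eventually.of_forall fun z => ?_
      have hw : (0:ℝ) ≤ |z| ^ (-(1 + α)) := Real.rpow_nonneg (abs_nonneg z) _
      have habs : ∀ u, ‖kerF α g u z‖ = |phiF g u z| * |z| ^ (-(1 + α)) := by
        intro u
        rw [Real.norm_eq_abs, kerF, abs_mul, abs_of_nonneg hw]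
      have hnn : (0:ℝ) ≤ ∫ u : ℝ, ‖kerF α g u z‖ :=
        integral_nonneg fun u => norm_nonneg _
      rw [Real.norm_eq_abs, abs_of_nonneg hnn]
      have hsplit : (∫ u : ℝ, ‖kerF α g u z‖) = (∫ u : ℝ, |phiF g u z|) * |z| ^ (-(1 + α)) := by
        simp_rw [habs]
        exact integral_mul_const _ _
      rw [hsplit]
      by_cases hz : |z| ≤ 1
      · have hmono : (∫ u : ℝ, |phiF g u z|) ≤ C * z ^ 2 * ID := by
          have : (∫ u : ℝ, |phiF g u z|) ≤ ∫ u : ℝ, C * z ^ 2 * (1 + u ^ 2)⁻¹ := by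
            apply integral_mono (phi_int hg hgpos hgint hdec z).abs
              ((integrable_inv_one_add_sq).const_mul (C * z ^ 2))
            intro u
            calc |phiF g u z| ≤ C * (1 + u ^ 2)⁻¹ * z ^ 2 := phiF_small hg hdec u z hz
            _ = C * z ^ 2 * (1 + u ^ 2)⁻¹ := by ring
          rwa [integral_const_mul] at this
        rw [if_pos hz]
        calc (∫ u : ℝ, |phiF g u z|) * |z| ^ (-(1 + α))
            ≤ (C * z ^ 2 * ID) * |z| ^ (-(1 + α)) := mul_le_mul_of_nonneg_right hmono hw
        _ = (C * ID * z ^ 2) * |z| ^ (-(1 + α)) := by ring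
      · have hmono : (∫ u : ℝ, |phiF g u z|) ≤ 2 * IG := by
          have h1 : (∫ u : ℝ, |phiF g u z|) ≤ ∫ u : ℝ, (g (u + z) + g u) := by
            apply integral_mono (phi_int hg hgpos hgint hdec z).abs
              ((hgint.comp_add_right z).add hgint)
            intro u
            show |phiF g u z| ≤ g (u + z) + g u
            have hphi : phiF g u z = g (u + z) - g u := by simp [phiF, hz]
            rw [hphi]
            calc |g (u + z) - g u| ≤ |g (u + z)| + |g u| := abs_sub _ _
            _ = g (u + z) + g u := by
                rw [abs_of_nonneg (hgpos _).le, abs_of_nonneg (hgpos _).le]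
          have h2 : (∫ u : ℝ, (g (u + z) + g u)) = 2 * IG := by
            rw [integral_add (hgint.comp_add_right z) hgint,
              integral_add_right_eq_self g z]
            ring
          rw [h2] at h1; exact h1
        rw [if_neg hz]
        exact mul_le_mul_of_nonneg_right hmono hw

private lemma deriv_odd {g : ℝ → ℝ} (heven : ∀ x, g x = g (-x)) (x : ℝ) :
    deriv g (-x) = -deriv g x := by
  have h1 : g = fun y => g (-y) := funext heven
  have h2 : deriv g x = deriv (fun y => g (-y)) x := by rw [← h1]
  rw [deriv_comp_neg] at h2
  linarith

private lemma int_deriv_zero {g : ℝ → ℝ} (heven : ∀ x, g x = g (-x)) :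
    (∫ x : ℝ, deriv g x) = 0 := by
  have h := integral_neg_eq_self (deriv g) (volume : Measure ℝ)
  have h2 : (∫ x : ℝ, deriv g (-x)) = ∫ x : ℝ, -deriv g x := by
    congr 1; funext x; rw [deriv_odd heven x]
  rw [h2, integral_neg] at h
  linarith

include hg hgpos hgint hdec in
private lemma phi_integral_zero (heven : ∀ x, g x = g (-x)) (z : ℝ) :
    (∫ u : ℝ, phiF g u z) = 0 := by
  set c : ℝ := z * (if |z| ≤ 1 then (1:ℝ) else 0) with hc
  have h1 : Integrable (fun u => g (u + z) - g u) := (hgint.comp_add_right z).sub hgint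
  have hrw : (fun u => phiF g u z) = fun u => (g (u + z) - g u) - deriv g u * c := by
    funext u; simp only [phiF, hc]; ring
  have h2 : Integrable (fun u => deriv g u * c) := by
    have : (fun u => deriv g u * c) = fun u => (g (u + z) - g u) - phiF g u z := by
      funext u; simp only [phiF, hc]; ring
    rw [this]
    exact h1.sub (phi_int hg hgpos hgint hdec z)
  rw [hrw, integral_sub h1 h2, integral_sub (hgint.comp_add_right z) hgint,
    integral_add_right_eq_self g z, integral_mul_const, int_deriv_zero heven]
  simp

include hα0 hα1 hg hgpos hgint hdec in
private lemma lap_integral_zero (heven : ∀ x, g x = g (-x)) :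
    (∫ u : ℝ, fracLap1 α g u) = 0 := by
  have hswap := MeasureTheory.integral_integral_swap
    (f := fun u z => kerF α g u z) (ker_prod_int hα0 hα1 hg hgpos hgint hdec)
  have hz : ∀ z : ℝ, (∫ u : ℝ, kerF α g u z) = 0 := by
    intro z
    have : (fun u => kerF α g u z) = fun u => phiF g u z * |z| ^ (-(1 + α)) := rfl
    rw [this, integral_mul_const, phi_integral_zero hg hgpos hgint hdec heven z, zero_mul]
  have h0 : (∫ u : ℝ, ∫ z : ℝ, kerF α g u z) = 0 := by
    rw [hswap]
    simp only [hz, integral_zero]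
  calc (∫ u : ℝ, fracLap1 α g u) = ∫ u : ℝ, -(fracC α * ∫ z : ℝ, kerF α g u z) := rfl
  _ = -(fracC α * ∫ u : ℝ, ∫ z : ℝ, kerF α g u z) := by
      rw [integral_neg, integral_const_mul]
  _ = 0 := by rw [h0]; simp

include hα0 hα1 hg hgpos hgint hdec in
private lemma lap_integrable : Integrable (fracLap1 α g) := by
  have h := (ker_prod_int hα0 hα1 hg hgpos hgint hdec (α := α)).integral_prod_left
  have he : fracLap1 α g = fun u => -(fracC α * ∫ z : ℝ, kerF α g u z) := rfl
  rw [he]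
  exact (h.const_mul (fracC α)).neg

private lemma lap_even {α : ℝ} {g : ℝ → ℝ} (heven : ∀ x, g x = g (-x)) (u : ℝ) :
    fracLap1 α g (-u) = fracLap1 α g u := by
  have hker : ∀ z : ℝ, kerF α g (-u) (-z) = kerF α g u z := by
    intro z
    unfold kerF phiF
    rw [show -u + -z = -(u + z) by ring, ← heven (u + z), ← heven u, abs_neg,
      deriv_odd heven u]
    ring_nf
  calc fracLap1 α g (-u) = -(fracC α * ∫ z : ℝ, kerF α g (-u) z) := rfl
  _ = -(fracC α * ∫ z : ℝ, kerF α g (-u) (-z)) := by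
      rw [integral_neg_eq_self (fun z => kerF α g (-u) z) volume]
  _ = -(fracC α * ∫ z : ℝ, kerF α g u z) := by simp_rw [hker]
  _ = fracLap1 α g u := rfl

include hα0 hα1 hg hgpos in
private lemma lap_cont {M : ℝ} (hM1 : ∀ x, g x ≤ M) (hM3 : ∀ x, |deriv (deriv g) x| ≤ M) :
    Continuous (fracLap1 α g) := by
  have hgc : Continuous g := hg.continuous
  have hg'c : Continuous (deriv g) := (contDiff_deriv_one hg).continuous
  have hI : Continuous fun u => ∫ z : ℝ, kerF α g u z := by
    rw [continuous_iff_continuousAt]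
    intro u0
    apply continuousAt_of_dominated
      (bound := fun z => (if |z| ≤ 1 then M * z ^ 2 else 2 * M) * |z| ^ (-(1 + α)))
    · apply Filter.Eventually.of_forall; intro x
      exact ((ker_measurable hgc hg'c).comp measurable_prodMk_left).aestronglyMeasurable
    · apply Filter.Eventually.of_forall; intro x
      apply Filter.Eventually.of_forall; intro z
      have hw : (0:ℝ) ≤ |z| ^ (-(1 + α)) := Real.rpow_nonneg (abs_nonneg z) _
      rw [Real.norm_eq_abs, kerF, abs_mul, abs_of_nonneg hw]
      apply mul_le_mul_of_nonneg_right _ hw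
      by_cases hz : |z| ≤ 1
      · rw [if_pos hz]
        have := taylor_bound hg x z M (fun y _ => hM3 y)
        simpa [phiF, hz] using this
      · rw [if_neg hz]
        have hphi : phiF g x z = g (x + z) - g x := by simp [phiF, hz]
        rw [hphi]
        calc |g (x + z) - g x| ≤ |g (x + z)| + |g x| := abs_sub _ _
        _ = g (x + z) + g x := by
            rw [abs_of_nonneg (hgpos _).le, abs_of_nonneg (hgpos _).le]
        _ ≤ 2 * M := by linarith [hM1 (x + z), hM1 x]
    · exact hfun_int hα0 hα1 M (2 * M)
    · apply Filter.Eventually.of_forall; intro z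
      apply Continuous.continuousAt
      exact (((hgc.comp (continuous_id.add continuous_const)).sub hgc).sub
        ((hg'c.mul continuous_const).mul continuous_const)).mul continuous_const
  have he : fracLap1 α g = fun u => -(fracC α * ∫ z : ℝ, kerF α g u z) := rfl
  rw [he]
  exact (continuous_const.mul hI).neg

end ctx

private lemma g_deriv {V : ℝ → ℝ} (hV : ContDiff ℝ 2 V) (x : ℝ) :
    deriv (fun y => Real.exp (-(V y))) x = -deriv V x * Real.exp (-(V x)) := by
  have h1 : HasDerivAt V (deriv V x) x := ((hV.differentiable two_ne_zero) x).hasDerivAt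
  have h2 : HasDerivAt (fun y => Real.exp (-(V y))) (Real.exp (-(V x)) * -deriv V x) x :=
    (h1.neg).exp
  rw [h2.deriv]; ring

private lemma g_deriv2 {V : ℝ → ℝ} (hV : ContDiff ℝ 2 V) (x : ℝ) :
    deriv (deriv (fun y => Real.exp (-(V y)))) x
      = ((deriv V x) ^ 2 - deriv (deriv V) x) * Real.exp (-(V x)) := by
  have hd : deriv (fun y => Real.exp (-(V y))) = fun x => -deriv V x * Real.exp (-(V x)) :=
    funext (g_deriv hV)
  rw [hd]
  have h1 : HasDerivAt V (deriv V x) x := ((hV.differentiable two_ne_zero) x).hasDerivAt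
  have h1' : HasDerivAt (deriv V) (deriv (deriv V) x) x :=
    (((contDiff_deriv_one hV).differentiable one_ne_zero) x).hasDerivAt
  have h2 : HasDerivAt (fun y => Real.exp (-(V y))) (Real.exp (-(V x)) * -deriv V x) x :=
    (h1.neg).exp
  have h3 : HasDerivAt (fun x => -deriv V x * Real.exp (-(V x)))
      (-deriv (deriv V) x * Real.exp (-(V x)) + -deriv V x * (Real.exp (-(V x)) * -deriv V x)) x :=
    (h1'.neg).mul h2
  rw [h3.deriv]; ring

end Aux

theorem stmt_12 (α : ℝ) (hα : α ∈ Set.Ioc (0 : ℝ) 1)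
    (V : ℝ → ℝ) (hV : ContDiff ℝ 2 V)
    (hsym : ∀ x : ℝ, V x = V (-x))
    (hL1 : Integrable (fun x => Real.exp (-(V x))))
    (hCb2 : ∃ M : ℝ, ∀ x : ℝ, Real.exp (-(V x)) ≤ M ∧
      |deriv (fun y => Real.exp (-(V y))) x| ≤ M ∧
      |deriv (deriv (fun y => Real.exp (-(V y)))) x| ≤ M)
    (hlim : ∃ M R : ℝ, ∀ x : ℝ, R ≤ |x| →
      |x| ^ 3 * Real.exp (-(V x)) * |(deriv V x) ^ 2 - deriv (deriv V) x| ≤ M) :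
    (∫ u in Set.Ioi (0 : ℝ), fracLap1 α (fun y => Real.exp (-(V y))) u = 0) ∧
    (fracDrift1 α V 0 = 0 ∧ ∀ x : ℝ, fracDrift1 α V (-x) = -fracDrift1 α V x) ∧
    ((∀ x : ℝ, 0 ≤ x → fracDrift1 α V x =
        Real.exp (V x) * ∫ z in Set.Ioi x, fracLap1 α (fun y => Real.exp (-(V y))) z) ∧
      (∀ x : ℝ, x < 0 → fracDrift1 α V x =
        -Real.exp (V x) * ∫ z in Set.Ioi (-x), fracLap1 α (fun y => Real.exp (-(V y))) z)) ∧
    ContDiff ℝ 1 (fracDrift1 α V) := by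
  obtain ⟨hα0, hα1⟩ := hα
  obtain ⟨M, hM⟩ := hCb2
  obtain ⟨Ml, R, hlim⟩ := hlim
  set g : ℝ → ℝ := fun y => Real.exp (-(V y)) with hgdef
  have hg : ContDiff ℝ 2 g := (hV.neg).exp
  have hgpos : ∀ x, 0 < g x := fun x => Real.exp_pos _
  have hgint : Integrable g := hL1
  have heven : ∀ x, g x = g (-x) := fun x => by
    simp only [hgdef]; rw [← hsym x]
  have hM1 : ∀ x, g x ≤ M := fun x => (hM x).1
  have hM3 : ∀ x, |deriv (deriv g) x| ≤ M := fun x => (hM x).2.2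
  have hM0 : (0:ℝ) ≤ M := le_trans (hgpos 0).le (hM1 0)
  set R' : ℝ := max R 3 with hR'
  set Ml' : ℝ := max Ml 0 with hMl'
  have hMl0 : (0:ℝ) ≤ Ml' := le_max_right Ml 0
  set C : ℝ := max ((27/4) * Ml') (M * (1 + (R' + 1) ^ 2)) with hCdef
  -- the decay bound
  have hdec : ∀ u x : ℝ, |x - u| ≤ 1 → |deriv (deriv g) x| ≤ C * (1 + u ^ 2)⁻¹ := by
    intro u x hxu
    have hu2 : (0:ℝ) < 1 + u ^ 2 := by positivity
    rw [← div_eq_mul_inv, le_div_iff₀ hu2]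
    rcases le_or_gt |u| (R' + 1) with hu | hu
    · have hu2' : u ^ 2 ≤ (R' + 1) ^ 2 := by
        rw [← sq_abs u]
        apply pow_le_pow_left₀ (abs_nonneg u) hu
      have h1 : |deriv (deriv g) x| * (1 + u ^ 2) ≤ M * (1 + (R' + 1) ^ 2) :=
        mul_le_mul (hM3 x) (by linarith) (by positivity) hM0
      exact le_trans h1 (le_max_right _ _)
    · have hR3 : (3:ℝ) ≤ R' := le_max_right R 3
      have hu4 : (4:ℝ) ≤ |u| := by linarith
      have hx1 : |u| - 1 ≤ |x| := by
        have h1 := abs_sub_abs_le_abs_sub u x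
        have h2 : |u - x| ≤ 1 := by rwa [abs_sub_comm]
        linarith
      have hxR : R ≤ |x| := by
        have : R ≤ R' := le_max_left R 3
        linarith
      have hlx := hlim x hxR
      have habs : |deriv (deriv g) x| * |x| ^ 3 ≤ Ml' := by
        have hgd2 : deriv (deriv g) x = ((deriv V x) ^ 2 - deriv (deriv V) x) * g x := by
          rw [hgdef]; exact g_deriv2 hV x
        rw [hgd2, abs_mul, abs_of_pos (hgpos x)]
        calc |(deriv V x) ^ 2 - deriv (deriv V) x| * g x * |x| ^ 3
            = |x| ^ 3 * g x * |(deriv V x) ^ 2 - deriv (deriv V) x| := by ring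
        _ ≤ Ml := hlx
        _ ≤ Ml' := le_max_left Ml 0
      have hkey : 4 * (1 + |u| ^ 2) ≤ 27 * (|u| - 1) ^ 3 := by
        nlinarith [sq_nonneg (|u| - 4), mul_nonneg (sub_nonneg.mpr hu4) (sq_nonneg (|u| - 4))]
      have hx3 : (|u| - 1) ^ 3 ≤ |x| ^ 3 := pow_le_pow_left₀ (by linarith) hx1 3
      have hgnn : (0:ℝ) ≤ |deriv (deriv g) x| := abs_nonneg _
      have e1 : |deriv (deriv g) x| * (1 + u ^ 2)
          ≤ |deriv (deriv g) x| * ((27/4) * (|u| - 1) ^ 3) := by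
        apply mul_le_mul_of_nonneg_left _ hgnn
        have : u ^ 2 = |u| ^ 2 := (sq_abs u).symm
        linarith
      have e2 : |deriv (deriv g) x| * ((27/4) * (|u| - 1) ^ 3)
          ≤ (27/4) * (|deriv (deriv g) x| * |x| ^ 3) := by
        have := mul_le_mul_of_nonneg_left hx3 hgnn
        nlinarith
      have e3 : (27/4) * (|deriv (deriv g) x| * |x| ^ 3) ≤ (27/4) * Ml' := by linarith
      exact le_trans (le_trans e1 (le_trans e2 e3)) (le_max_left _ _)
  -- core lap facts
  have Lint : Integrable (fracLap1 α g) := lap_integrable hα0 hα1 hg hgpos hgint hdec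
  have Ltot : (∫ u : ℝ, fracLap1 α g u) = 0 :=
    lap_integral_zero hα0 hα1 hg hgpos hgint hdec heven
  have Leven : ∀ u : ℝ, fracLap1 α g (-u) = fracLap1 α g u := lap_even heven
  have Lcont : Continuous (fracLap1 α g) := lap_cont hα0 hα1 hg hgpos hM1 hM3
  have reflect : ∀ x : ℝ,
      (∫ u in Set.Iic (-x), fracLap1 α g u) = ∫ u in Set.Ioi x, fracLap1 α g u := by
    intro x
    have h := integral_comp_neg_Iic (-x) (fracLap1 α g)
    rw [neg_neg] at h
    rw [← h]
    apply setIntegral_congr_fun measurableSet_Iic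
    intro u _
    exact (Leven u).symm
  have split : ∀ x : ℝ,
      (∫ u in Set.Iic x, fracLap1 α g u) = -∫ u in Set.Ioi x, fracLap1 α g u := by
    intro x
    have h := intervalIntegral.integral_Iic_add_Ioi (b := x)
      Lint.integrableOn Lint.integrableOn
    rw [Ltot] at h; linarith
  have S0 : (∫ u in Set.Ioi (0:ℝ), fracLap1 α g u) = 0 := by
    have h1 := reflect 0
    rw [neg_zero] at h1
    have h2 := split 0
    linarith
  have hIic0 : (∫ u in Set.Iic (0:ℝ), fracLap1 α g u) = 0 := by
    rw [split 0, S0, neg_zero]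
  refine ⟨S0, ⟨?_, ?_⟩, ⟨?_, ?_⟩, ?_⟩
  · show -Real.exp (V 0) * (∫ u in Set.Iic (0:ℝ), fracLap1 α g u) = 0
    rw [hIic0, mul_zero]
  · intro x
    show -Real.exp (V (-x)) * (∫ u in Set.Iic (-x), fracLap1 α g u)
      = -(-Real.exp (V x) * ∫ u in Set.Iic x, fracLap1 α g u)
    rw [← hsym x, reflect x, split x]
    ring
  · intro x _
    show -Real.exp (V x) * (∫ u in Set.Iic x, fracLap1 α g u)
      = Real.exp (V x) * ∫ z in Set.Ioi x, fracLap1 α g z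
    rw [split x]; ring
  · intro x _
    show -Real.exp (V x) * (∫ u in Set.Iic x, fracLap1 α g u)
      = -Real.exp (V x) * ∫ z in Set.Ioi (-x), fracLap1 α g z
    have h := reflect (-x)
    rw [neg_neg] at h
    rw [h]
  · -- C¹ smoothness
    set L : ℝ → ℝ := fracLap1 α g with hL
    set F : ℝ → ℝ := fun x => ∫ u in Set.Iic x, L u with hF
    have hFder : ∀ x : ℝ, HasDerivAt F (L x) x := by
      intro x
      have key : ∀ y : ℝ, F y = F 0 + ∫ t in (0:ℝ)..y, L t := by
        intro y
        have h := intervalIntegral.integral_Iic_sub_Iic (μ := volume) (f := L)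
          (a := 0) (b := y) Lint.integrableOn Lint.integrableOn
        have : F y - F 0 = ∫ t in (0:ℝ)..y, L t := h
        linarith
      rw [show F = fun y => F 0 + ∫ t in (0:ℝ)..y, L t from funext key]
      exact ((Lcont.integral_hasStrictDerivAt 0 x).hasDerivAt).const_add (F 0)
    have hVd : Differentiable ℝ V := hV.differentiable two_ne_zero
    have hbder : ∀ x : ℝ, HasDerivAt (fracDrift1 α V)
        (-(Real.exp (V x) * deriv V x) * F x + -Real.exp (V x) * L x) x := by
      intro x
      have h1 : HasDerivAt (fun y => Real.exp (V y)) (Real.exp (V x) * deriv V x) x :=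
        ((hVd x).hasDerivAt).exp
      have h2 := (h1.neg).mul (hFder x)
      have he : fracDrift1 α V = fun y => -Real.exp (V y) * F y := rfl
      rw [he]
      exact h2
    have hdiff : Differentiable ℝ (fracDrift1 α V) := fun x => (hbder x).differentiableAt
    have hderiv_eq : deriv (fracDrift1 α V)
        = fun x => -(Real.exp (V x) * deriv V x) * F x + -Real.exp (V x) * L x :=
      funext fun x => (hbder x).deriv
    have hFcont : Continuous F :=
      Differentiable.continuous (fun x => (hFder x).differentiableAt)
    have hVdc : Continuous (deriv V) := hV.continuous_deriv one_le_two
    have hdc : Continuous (deriv (fracDrift1 α V)) := by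
      rw [hderiv_eq]
      exact ((((Real.continuous_exp.comp hV.continuous).mul hVdc).neg.mul hFcont).add
        (((Real.continuous_exp.comp hV.continuous).neg).mul Lcont))
    exact contDiff_one_iff_deriv.mpr ⟨hdiff, hdc⟩
end
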